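/- arXiv:2401.03112 — 7 statements merged into one kernel-verified Lean document; each statement's English description precedes it below -/
import Mathlib

section
/- Let D be a division ring, and let {a_1,…,a_s} and {b_1,…,b_s} be two subsets of D, each linearly independent over the center Z(D). Then the element Σ_{i=1}^s a_i·X·b_i of D{X} is nonzero. -/
noncomputable section

/-- The defining relations for the free product `D ∗_{Z(D)} Z(D)⟨X_i : i ∈ s⟩`:
we quotient the free algebra over the center on the type `D ⊕ s` so that the
inclusion of `D` becomes a morphism of `Z(D)`-algebras. -/
inductive GenPolyRel (D : Type*) [DivisionRing D] (s : Type*) :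
    FreeAlgebra (Subring.center D) (D ⊕ s) → FreeAlgebra (Subring.center D) (D ⊕ s) → Prop
  | add (a b : D) : GenPolyRel D s (FreeAlgebra.ι _ (Sum.inl (a + b)))
      (FreeAlgebra.ι _ (Sum.inl a) + FreeAlgebra.ι _ (Sum.inl b))
  | mul (a b : D) : GenPolyRel D s (FreeAlgebra.ι _ (Sum.inl (a * b)))
      (FreeAlgebra.ι _ (Sum.inl a) * FreeAlgebra.ι _ (Sum.inl b))
  | one : GenPolyRel D s (FreeAlgebra.ι _ (Sum.inl 1)) 1
  | central (c : Subring.center D) (a : D) :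
      GenPolyRel D s (FreeAlgebra.ι _ (Sum.inl (c • a))) (c • FreeAlgebra.ι _ (Sum.inl a))

/-- The ring of generalized polynomials `D{X_i : i ∈ s}` with coefficients in `D`,
i.e. the coproduct (free product) of the `Z(D)`-algebras `D` and the free
algebra on `s` over `Z(D)`. For `s = Unit` this is `D{X}`, the free product of
`D` and the polynomial algebra `Z(D)[X]`. -/
def GenPoly (D : Type*) [DivisionRing D] (s : Type*) : Type _ :=
  RingQuot (GenPolyRel D s)

instance (D : Type*) [DivisionRing D] (s : Type*) : Ring (GenPoly D s) :=
  inferInstanceAs (Ring (RingQuot (GenPolyRel D s)))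

instance (D : Type*) [DivisionRing D] (s : Type*) :
    Algebra (Subring.center D) (GenPoly D s) :=
  inferInstanceAs (Algebra (Subring.center D) (RingQuot (GenPolyRel D s)))

/-- The canonical image of a coefficient `a : D` in `D{X_i}`. -/
def GenPoly.C {D : Type*} [DivisionRing D] {s : Type*} (a : D) : GenPoly D s :=
  RingQuot.mkAlgHom (Subring.center D) (GenPolyRel D s) (FreeAlgebra.ι _ (Sum.inl a))

/-- The variable `X_i` in `D{X_i}`. -/
def GenPoly.X {D : Type*} [DivisionRing D] {s : Type*} (i : s) : GenPoly D s :=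
  RingQuot.mkAlgHom (Subring.center D) (GenPolyRel D s) (FreeAlgebra.ι _ (Sum.inr i))

/-- Evaluation of a generalized polynomial at the point `x : s → D`, i.e. the
`Z(D)`-algebra map `D{X_i} → D` restricting to the identity on `D` and sending
`X_i ↦ x i`. -/
def GenPoly.eval {D : Type*} [DivisionRing D] {s : Type*} (x : s → D) :
    GenPoly D s →ₐ[Subring.center D] D :=
  RingQuot.liftAlgHom (Subring.center D)
    ⟨FreeAlgebra.lift (Subring.center D) (Sum.elim id x), by
      intro u v h
      induction h with
      | add a b => simp
      | mul a b => simp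
      | one => simp
      | central c a => simp⟩

lemma eval_C {D : Type*} [DivisionRing D] {s : Type*} (x : s → D) (a : D) :
    GenPoly.eval x (GenPoly.C a) = a := by
  show RingQuot.liftAlgHom (Subring.center D) ⟨_, _⟩ (RingQuot.mkAlgHom _ _ _) = a
  rw [RingQuot.liftAlgHom_mkAlgHom_apply]
  simp

lemma eval_X {D : Type*} [DivisionRing D] {s : Type*} (x : s → D) (i : s) :
    GenPoly.eval x (GenPoly.X i) = x i := by
  show RingQuot.liftAlgHom (Subring.center D) ⟨_, _⟩ (RingQuot.mkAlgHom _ _ _) = x i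
  rw [RingQuot.liftAlgHom_mkAlgHom_apply]
  simp

lemma key (D : Type*) [DivisionRing D] :
    ∀ (n : ℕ) (a c : Fin n → D), LinearIndependent (Subring.center D) a →
      (∀ x : D, ∑ i, a i * x * c i = 0) → ∀ i, c i = 0 := by
  intro n
  induction n with
  | zero => intro a c _ _ i; exact absurd i.2 (by simp)
  | succ n ih =>
    intro a c ha h
    have ha' : LinearIndependent (Subring.center D) (a ∘ Fin.castSucc) :=
      ha.comp Fin.castSucc (Fin.castSucc_injective n)
    have hlast : c (Fin.last n) = 0 := by
      by_contra hc
      set d : Fin (n + 1) → D := fun i => c i * (c (Fin.last n))⁻¹ with hd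
      have hd' : ∀ x : D, ∑ i, a i * x * d i = 0 := by
        intro x
        have := congrArg (· * (c (Fin.last n))⁻¹) (h x)
        simpa [Finset.sum_mul, mul_assoc, hd] using this
      have hdlast : d (Fin.last n) = 1 := by
        simp [hd, mul_inv_cancel₀ hc]
      -- commutator relation
      have hcomm : ∀ y : D, ∀ i : Fin n, y * d i.castSucc = d i.castSucc * y := by
        intro y
        have key2 : ∀ x : D,
            ∑ i : Fin n, (a ∘ Fin.castSucc) i * x * (y * d i.castSucc - d i.castSucc * y) = 0 := by
          intro x
          have h1 := hd' (x * y)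
          have h2 := congrArg (· * y) (hd' x)
          simp only [Finset.sum_mul, zero_mul] at h2
          have h3 : ∑ i : Fin (n + 1), (a i * x * (y * d i - d i * y)) = 0 := by
            calc ∑ i : Fin (n + 1), (a i * x * (y * d i - d i * y))
                = (∑ i : Fin (n + 1), a i * (x * y) * d i)
                    - ∑ i : Fin (n + 1), a i * x * d i * y := by
                  rw [← Finset.sum_sub_distrib]
                  exact Finset.sum_congr rfl fun i _ => by noncomm_ring
              _ = 0 := by rw [h1, h2, sub_zero]
          rw [Fin.sum_univ_castSucc] at h3
          simpa [hdlast] using h3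
        intro i
        have := ih (a ∘ Fin.castSucc) (fun i => y * d i.castSucc - d i.castSucc * y) ha' key2 i
        exact sub_eq_zero.mp this
      have hmem : ∀ i : Fin n, d i.castSucc ∈ Subring.center D := by
        intro i
        rw [Subring.mem_center_iff]
        intro y
        exact hcomm y i
      -- linear dependence
      have hrel : ∑ i, a i * d i = 0 := by simpa using hd' 1
      set g : Fin (n + 1) → Subring.center D := fun i =>
        if h : i = Fin.last n then 1 else
          ⟨d i, by
            obtain ⟨j, rfl⟩ := Fin.exists_castSucc_eq.mpr h
            exact hmem j⟩ with hg
      have hcoe : ∀ i, g i • a i = a i * d i := by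
        intro i
        show (g i : D) * a i = a i * d i
        by_cases hi : i = Fin.last n
        · subst hi; simp [hg, hdlast]
        · obtain ⟨j, rfl⟩ := Fin.exists_castSucc_eq.mpr hi
          rw [hg]
          simp only [dif_neg hi]
          exact (hcomm (a j.castSucc) j).symm
      have hsum : ∑ i, g i • a i = 0 :=
        (Finset.sum_congr rfl fun i _ => hcoe i).trans hrel
      have := Fintype.linearIndependent_iff.mp ha g hsum (Fin.last n)
      rw [hg] at this
      simp at this
    -- now reduce to n
    have hred : ∀ x : D, ∑ i : Fin n, (a ∘ Fin.castSucc) i * x * (c ∘ Fin.castSucc) i = 0 := by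
      intro x
      have := h x
      rw [Fin.sum_univ_castSucc, hlast] at this
      simpa using this
    intro i
    rcases Fin.eq_castSucc_or_eq_last i with ⟨j, rfl⟩ | rfl
    · exact ih _ _ ha' hred j
    · exact hlast


/-- If `{a_1,…,a_s}` and `{b_1,…,b_s}` (`s ≥ 1`) are subsets of `D`, each linearly
independent over the center `Z(D)`, then `Σ_i a_i X b_i ≠ 0` in `D{X}`. -/
theorem lem13 (D : Type*) [DivisionRing D] (s : ℕ) (hs : 0 < s) (a b : Fin s → D)
    (ha : LinearIndependent (Subring.center D) a)
    (hb : LinearIndependent (Subring.center D) b) :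
    ∑ i : Fin s, GenPoly.C (a i) * GenPoly.X (() : Unit) * GenPoly.C (b i) ≠ 0 := by
  intro h0
  have hb0 : b ⟨0, hs⟩ ≠ 0 := hb.ne_zero _
  refine hb0 (key D s a b ha ?_ _)
  intro x
  have := congrArg (GenPoly.eval (fun _ : Unit => x)) h0
  simpa [map_sum, map_mul, eval_C, eval_X] using this


end
end

section
/- Let F be a field, R a unital F-algebra, and n ≠ 2 an integer. Suppose f, g : R → R are additive maps satisfying f(x) = xⁿ·g(x⁻¹) for all units x ∈ R^× (where xⁿ is computed in the group of units when n is negative). If it is not the case that F has characteristic p > 0 with (p−1) dividing (n−2), then f(u) = 0 and g(u) = 0 for every unit u ∈ R^×. -/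
lemma aux_key {F : Type*} [Field F] {R : Type*} [Ring R] [Algebra F R]
    (n : ℤ) (f g : R → R)
    (hf : ∀ x y : R, f (x + y) = f x + f y)
    (hg : ∀ x y : R, g (x + y) = g x + g y)
    (hfg : ∀ x : Rˣ, f (x : R) = ((x ^ n : Rˣ) : R) * g ((x⁻¹ : Rˣ) : R))
    (t : Fˣ) (m : ℕ) (hm : (m : F) = (t : F)) (ht : t ^ (n - 2) ≠ 1) :
    ∀ u : Rˣ, f (u : R) = 0 := by
  have hfns : ∀ (k : ℕ) (x : R), f (k • x) = k • f x :=
    fun k x => (AddMonoidHom.mk' f hf).map_nsmul k x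
  have hgns : ∀ (k : ℕ) (x : R), g (k • x) = k • g x :=
    fun k x => (AddMonoidHom.mk' g hg).map_nsmul k x
  intro u
  set φ : F →+* R := algebraMap F R with hφ
  set s : Rˣ := Units.map (φ : F →* R) t with hs
  have hsval : (s : R) = φ (t : F) := rfl
  have hsc : ∀ x : R, (s : R) * x = x * (s : R) := fun x => by
    rw [hsval]; exact (Algebra.commutes (t : F) x)
  have hcomm : Commute s u := Units.ext (by
    simpa [Units.val_mul] using hsc (u : R))
  have hcomm' : Commute s⁻¹ u := hcomm.inv_left
  set v : Rˣ := s⁻¹ * u with hv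
  have hmR : (m : R) = (s : R) := by
    rw [hsval, ← hm]; exact (map_natCast φ m).symm
  have hu_eq : (u : R) = m • (v : R) := by
    rw [nsmul_eq_mul, hmR]
    calc (u : R) = ((s * v : Rˣ) : R) := by rw [hv, mul_inv_cancel_left]
      _ = (s : R) * (v : R) := Units.val_mul s v
  have hvinv : ((v⁻¹ : Rˣ) : R) = m • ((u⁻¹ : Rˣ) : R) := by
    have : v⁻¹ = s * u⁻¹ := by
      rw [hv, mul_inv_rev, inv_inv, hcomm.inv_right.eq]
    rw [this, Units.val_mul, ← hmR, nsmul_eq_mul]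
  set a : F := (((t ^ n)⁻¹ : Fˣ) : F) with ha
  have hsn : (s ^ n)⁻¹ = Units.map (φ : F →* R) (t ^ n)⁻¹ := by
    rw [hs, ← map_zpow, ← map_inv]
  have hvn : ((v ^ n : Rˣ) : R) = φ a * ((u ^ n : Rˣ) : R) := by
    rw [hv, hcomm'.mul_zpow, inv_zpow, hsn, Units.val_mul, Units.coe_map]
    rfl
  set c : F := ((t * t * (t ^ n)⁻¹ : Fˣ) : F) with hc
  have key : f (u : R) = c • f (u : R) := by
    calc f (u : R) = f (m • (v : R)) := by rw [← hu_eq]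
      _ = m • f (v : R) := hfns m _
      _ = m • (((v ^ n : Rˣ) : R) * g ((v⁻¹ : Rˣ) : R)) := by rw [hfg v]
      _ = m • (φ a * ((u ^ n : Rˣ) : R) * (m • g ((u⁻¹ : Rˣ) : R))) := by
          rw [hvn, hvinv, hgns]
      _ = m • (m • (φ a * ((u ^ n : Rˣ) : R) * g ((u⁻¹ : Rˣ) : R))) := by
          rw [mul_smul_comm]
      _ = (m * m) • (φ a * (((u ^ n : Rˣ) : R) * g ((u⁻¹ : Rˣ) : R))) := by
          rw [← mul_nsmul, mul_assoc]
      _ = (m * m) • (a • f (u : R)) := by rw [← hfg u, ← Algebra.smul_def]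
      _ = (((m * m : ℕ) : F) * a) • f (u : R) := by
          rw [mul_smul (((m * m : ℕ) : F)) a, Nat.cast_smul_eq_nsmul]
      _ = c • f (u : R) := by
          rw [hc, ha, Nat.cast_mul, hm, Units.val_mul, Units.val_mul]
  have hcne : c ≠ 1 := by
    intro h
    apply ht
    have h2 : t * t * (t ^ n)⁻¹ = 1 := Units.ext (by rw [← hc] at *; simpa using h)
    have h3 : t ^ (2 - n) = 1 := by
      rw [zpow_sub, ← h2]; congr 1; rw [← zpow_one t, ← zpow_add]; norm_num
    rw [show n - 2 = -(2 - n) by ring, zpow_neg, h3, inv_one]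
  have h2 : (1 - c) • f (u : R) = 0 := by
    rw [sub_smul, one_smul, ← key, sub_self]
  have hc1 : (1 : F) - c ≠ 0 := sub_ne_zero.mpr (fun h => hcne h.symm)
  calc f (u : R) = (1 - c)⁻¹ • ((1 - c) • f (u : R)) := by
        rw [smul_smul, inv_mul_cancel₀ hc1, one_smul]
    _ = 0 := by rw [h2, smul_zero]


lemma aux_exists (F : Type*) [Field F] (n : ℤ) (hn : n ≠ 2)
    (hchar : ¬ ∃ p : ℕ, 0 < p ∧ CharP F p ∧ ((p : ℤ) - 1) ∣ (n - 2)) :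
    ∃ (t : Fˣ) (m : ℕ), (m : F) = (t : F) ∧ t ^ (n - 2) ≠ 1 := by
  obtain ⟨p, hp⟩ := CharP.exists F
  rcases CharP.char_is_prime_or_zero F p with hpr | h0
  · -- char p prime
    haveI : Fact p.Prime := ⟨hpr⟩
    have hdvd : ¬ ((p : ℤ) - 1) ∣ (n - 2) := fun h => hchar ⟨p, hpr.pos, hp, h⟩
    obtain ⟨a, ha⟩ := IsCyclic.exists_generator (α := (ZMod p)ˣ)
    have horder : orderOf a = p - 1 := by
      rw [orderOf_eq_card_of_forall_mem_zpowers ha]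
      simp [Nat.card_eq_fintype_card, ZMod.card_units_eq_totient, Nat.totient_prime hpr]
    have hane : a ^ (n - 2) ≠ 1 := by
      intro h
      apply hdvd
      have : ((orderOf a : ℤ)) ∣ (n - 2) := orderOf_dvd_iff_zpow_eq_one.mpr h
      rw [horder] at this
      rwa [Nat.cast_sub hpr.one_lt.le, Nat.cast_one] at this
    set φ : ZMod p →+* F := ZMod.castHom (dvd_refl p) F with hφ
    have hinj : Function.Injective φ := φ.injective
    refine ⟨Units.map (φ : ZMod p →* F) a, ((a : ZMod p)).val, ?_, ?_⟩
    · rw [Units.coe_map]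
      show ((((a : ZMod p)).val : ℕ) : F) = φ (a : ZMod p)
      rw [← map_natCast φ, ZMod.natCast_val, ZMod.cast_id]
    · intro h
      apply hane
      rw [← map_zpow] at h
      exact Units.map_injective hinj (h.trans (map_one _).symm)
  · -- char zero
    subst h0
    haveI : CharZero F := CharP.charP_to_charZero F
    have h2 : (2 : F) ≠ 0 := two_ne_zero
    refine ⟨Units.mk0 2 h2, 2, by norm_num, ?_⟩
    intro h
    have h' : (2 : F) ^ (n - 2) = 1 := by
      have := congrArg (Units.val) h
      simpa using this
    have hk : n - 2 ≠ 0 := sub_ne_zero.mpr hn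
    have key : ∀ k : ℤ, 0 < k → (2 : F) ^ k ≠ 1 := by
      intro k hkpos hone
      rw [← Int.toNat_of_nonneg hkpos.le, zpow_natCast] at hone
      have : ((2 ^ k.toNat : ℕ) : F) = ((1 : ℕ) : F) := by push_cast; simpa using hone
      have := Nat.cast_injective this
      have h3 : k.toNat = 0 := by
        by_contra hne
        have := Nat.one_lt_two_pow_iff.mpr hne
        omega
      omega
    rcases lt_trichotomy (n - 2) 0 with hneg | hzero | hpos
    · apply key (-(n - 2)) (by omega)
      rw [zpow_neg, h', inv_one]
    · exact hk hzero
    · exact key _ hpos h'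

/-- Let `R` be a unital algebra over a field `F` and `n ≠ 2` an integer. If the additive
maps `f, g : R → R` satisfy `f(x) = xⁿ g(x⁻¹)` for all units `x` (powers computed in the
group of units), and it is not the case that `char F = p > 0` with `p − 1 ∣ n − 2`, then
`f` and `g` vanish on all units of `R`. -/
theorem thm2 (F : Type*) [Field F] (R : Type*) [Ring R] [Algebra F R]
    (n : ℤ) (hn : n ≠ 2) (f g : R → R)
    (hf : ∀ x y : R, f (x + y) = f x + f y)
    (hg : ∀ x y : R, g (x + y) = g x + g y)
    (hfg : ∀ x : Rˣ, f (x : R) = ((x ^ n : Rˣ) : R) * g ((x⁻¹ : Rˣ) : R))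
    (hchar : ¬ ∃ p : ℕ, 0 < p ∧ CharP F p ∧ ((p : ℤ) - 1) ∣ (n - 2)) :
    ∀ u : Rˣ, f (u : R) = 0 ∧ g (u : R) = 0 := by
  obtain ⟨t, m, hm, ht⟩ := aux_exists F n hn hchar
  have hfz : ∀ u : Rˣ, f (u : R) = 0 := aux_key n f g hf hg hfg t m hm ht
  intro u
  refine ⟨hfz u, ?_⟩
  have h := hfg u⁻¹
  rw [inv_inv, hfz u⁻¹] at h
  calc g (u : R)
      = ((((u⁻¹ ^ n)⁻¹ : Rˣ) : R)) * (((u⁻¹ ^ n : Rˣ) : R) * g (u : R)) := by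
        rw [← mul_assoc, ← Units.val_mul, inv_mul_cancel, Units.val_one, one_mul]
    _ = 0 := by rw [← h, mul_zero]
end

section
/- Let k > 1 be an integer and p > 2 a prime number. Suppose gcd(p,k) = 1 and k−1 is not a non-negative power of p (i.e., there is no integer j ≥ 0 with k−1 = p^j). Let m ≥ 0 be the largest integer such that p^m divides k−1. Then p does not divide the binomial coefficient C(k, p^m + 1). -/
lemma choose_pow_mul_modEq (p : ℕ) [Fact p.Prime] (s m : ℕ) :
    Nat.choose (p ^ m * s) (p ^ m) ≡ s [MOD p] := by
  induction m with
  | zero => simpa using Nat.ModEq.refl s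
  | succ m ih =>
    have hp : 0 < p := (Fact.out : p.Prime).pos
    have h := Choose.choose_modEq_choose_mod_mul_choose_div_nat
      (p := p) (n := p ^ (m + 1) * s) (k := p ^ (m + 1))
    have e1 : p ^ (m + 1) * s % p = 0 :=
      Nat.mod_eq_zero_of_dvd ((dvd_pow_self p (Nat.succ_ne_zero m)).mul_right s)
    have e2 : p ^ (m + 1) % p = 0 :=
      Nat.mod_eq_zero_of_dvd (dvd_pow_self p (Nat.succ_ne_zero m))
    have e3 : p ^ (m + 1) * s / p = p ^ m * s := by
      rw [pow_succ, mul_comm (p ^ m) p, mul_assoc, Nat.mul_div_cancel_left _ hp]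
    have e4 : p ^ (m + 1) / p = p ^ m := by
      rw [pow_succ, Nat.mul_div_cancel _ hp]
    rw [e1, e2, e3, e4, Nat.choose_self, one_mul] at h
    exact h.trans ih

/-- Let `k > 1` be an integer and `p > 2` a prime with `gcd(p,k) = 1` such that `k − 1`
is not a non-negative power of `p`. If `m ≥ 0` is the largest integer with `p^m ∣ k − 1`,
then `p ∤ C(k, p^m + 1)`. -/
theorem lem3i (k p m : ℕ) (hk : 1 < k) (hp : p.Prime) (hp2 : 2 < p)
    (hcop : Nat.gcd p k = 1)
    (hnotpow : ¬ ∃ j : ℕ, k - 1 = p ^ j)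
    (hm : p ^ m ∣ k - 1) (hmax : ¬ p ^ (m + 1) ∣ k - 1) :
    ¬ p ∣ Nat.choose k (p ^ m + 1) := by
  have : Fact p.Prime := ⟨hp⟩
  intro hdvd
  set s := (k - 1) / p ^ m with hs
  have hks : k - 1 = p ^ m * s := (Nat.mul_div_cancel' hm).symm
  have hps : ¬ p ∣ s := by
    rintro ⟨c, hc⟩
    exact hmax ⟨c, by rw [hks, hc, pow_succ]; ring⟩
  have hpk : ¬ p ∣ k := by
    intro h
    have hd : p ∣ Nat.gcd p k := Nat.dvd_gcd dvd_rfl h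
    rw [hcop] at hd
    exact hp.ne_one (Nat.dvd_one.mp hd)
  have hrec : k * Nat.choose (k - 1) (p ^ m) = Nat.choose k (p ^ m + 1) * (p ^ m + 1) := by
    have h := Nat.add_one_mul_choose_eq (k - 1) (p ^ m)
    rw [show k - 1 + 1 = k from by omega] at h
    exact h
  have hdvd2 : p ∣ Nat.choose (k - 1) (p ^ m) := by
    have h1 : p ∣ k * Nat.choose (k - 1) (p ^ m) := by
      rw [hrec]; exact hdvd.mul_right _
    exact (hp.dvd_mul.mp h1).resolve_left hpk
  have hmod : Nat.choose (k - 1) (p ^ m) ≡ s [MOD p] := by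
    rw [hks]; exact choose_pow_mul_modEq p s m
  have : p ∣ s := (Nat.modEq_zero_iff_dvd).mp
    (hmod.symm.trans ((Nat.modEq_zero_iff_dvd).mpr hdvd2))
  exact hps this
end

section
/- Let D be a noncommutative division ring with char D = p > 2, and let n > 2 be an integer with (p−1) dividing (n−2). Suppose f : D → D is an additive map satisfying f(x) = −xⁿ·f(x⁻¹) for all nonzero x ∈ D. Then f(x²) = ((1+x)ⁿ − xⁿ − 1)·f(x) for all x ∈ D. -/
/-- Let `D` be a noncommutative division ring with `char D = p > 2` and `n > 2` with
`p − 1 ∣ n − 2`. If the additive map `f : D → D` satisfies `f(x) = −xⁿ f(x⁻¹)` for all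
`x ∈ D^×`, then `f(x²) = ((1+x)ⁿ − xⁿ − 1)·f(x)` for all `x ∈ D`. -/
theorem lem4i (D : Type*) [DivisionRing D]
    (hnc : ∃ a b : D, a * b ≠ b * a)
    (p : ℕ) (hp : p.Prime) (hp2 : 2 < p) [CharP D p]
    (n : ℕ) (hn : 2 < n) (hdvd : (p - 1) ∣ (n - 2))
    (f : D → D)
    (hf : ∀ x y : D, f (x + y) = f x + f y)
    (hff : ∀ x : D, x ≠ 0 → f x = -(x ^ n * f x⁻¹)) :
    ∀ x : D, f (x ^ 2) = ((1 + x) ^ n - x ^ n - 1) * f x := by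
  have f0 : f 0 = 0 := by
    have h := hf 0 0
    rw [add_zero] at h
    exact (left_eq_add.mp h)
  have fneg : ∀ x : D, f (-x) = -f x := by
    intro x
    have h := hf x (-x)
    rw [add_neg_cancel, f0] at h
    exact eq_neg_of_add_eq_zero_right h.symm
  have fsub : ∀ a b : D, f (a - b) = f a - f b := by
    intro a b
    rw [sub_eq_add_neg, hf, fneg, sub_eq_add_neg]
  have two_ne : (2 : D) ≠ 0 := by
    intro h
    have h2 := (CharP.cast_eq_zero_iff D p 2).mp h
    have := Nat.le_of_dvd (by norm_num) h2
    omega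
  have f1 : f 1 = 0 := by
    have h := hff 1 one_ne_zero
    rw [one_pow, inv_one, one_mul] at h
    have h2 : (2 : D) * f 1 = 0 := by
      rw [two_mul]; nth_rewrite 1 [h]; exact neg_add_cancel _
    exact (mul_eq_zero.mp h2).resolve_left two_ne
  have finv : ∀ a : D, a ≠ 0 → f a⁻¹ = -((a ^ n)⁻¹ * f a) := by
    intro a ha
    have hpn : a ^ n ≠ 0 := pow_ne_zero n ha
    have h := hff a ha
    have h2 : a ^ n * f a⁻¹ = -f a := by rw [h, neg_neg]
    calc f a⁻¹ = (a ^ n)⁻¹ * (a ^ n * f a⁻¹) := by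
          rw [← mul_assoc, inv_mul_cancel₀ hpn, one_mul]
      _ = (a ^ n)⁻¹ * (-f a) := by rw [h2]
      _ = -((a ^ n)⁻¹ * f a) := by rw [mul_neg]
  intro x
  rcases eq_or_ne x 0 with hx | hx
  · subst hx
    rw [zero_pow (two_ne_zero), f0, mul_zero]
  rcases eq_or_ne (1 + x) 0 with hu | hu
  · have hxe : x = -1 := eq_neg_of_add_eq_zero_right hu
    subst hxe
    have hm1 : f (-1 : D) = 0 := by rw [fneg, f1, neg_zero]
    rw [hm1, mul_zero, show ((-1 : D) ^ 2) = 1 from neg_one_sq, f1]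
  -- main case
  have hcomm : Commute x (1 + x) := (Commute.one_right x).add_right (Commute.refl x)
  have hxu : x * (1 + x) = x + x ^ 2 := by rw [mul_add, mul_one, sq]
  have hprod_ne : x + x ^ 2 ≠ 0 := hxu ▸ mul_ne_zero hx hu
  have hinv : (x + x ^ 2)⁻¹ = x⁻¹ - (1 + x)⁻¹ := by
    rw [← hxu, mul_inv_rev]
    apply mul_left_cancel₀ hu
    rw [← mul_assoc, mul_inv_cancel₀ hu, one_mul, mul_sub, mul_inv_cancel₀ hu,
      add_mul, one_mul, mul_inv_cancel₀ hx, add_sub_cancel_right]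
  have hfu : f (1 + x) = f x := by rw [hf, f1, zero_add]
  have hpow : (x + x ^ 2) ^ n = x ^ n * (1 + x) ^ n := by
    rw [← hxu, hcomm.mul_pow]
  have hxn : x ^ n ≠ 0 := pow_ne_zero n hx
  have hun : (1 + x) ^ n ≠ 0 := pow_ne_zero n hu
  have hcn : Commute (x ^ n) ((1 + x) ^ n) := hcomm.pow_pow n n
  have key := hff (x + x ^ 2) hprod_ne
  rw [hinv, fsub, finv x hx, finv (1 + x) hu, hfu, hpow,
    show f (x + x ^ 2) = f x + f (x ^ 2) from hf x (x ^ 2)] at key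
  have e1 : x ^ n * (1 + x) ^ n * ((x ^ n)⁻¹ * f x) = (1 + x) ^ n * f x := by
    rw [hcn.eq, mul_assoc, ← mul_assoc (x ^ n), mul_inv_cancel₀ hxn, one_mul]
  have e2 : x ^ n * (1 + x) ^ n * (((1 + x) ^ n)⁻¹ * f x) = x ^ n * f x := by
    rw [mul_assoc, ← mul_assoc ((1 + x) ^ n), mul_inv_cancel₀ hun, one_mul]
  have expand : -(x ^ n * (1 + x) ^ n *
      (-((x ^ n)⁻¹ * f x) - -(((1 + x) ^ n)⁻¹ * f x)))
      = (1 + x) ^ n * f x - x ^ n * f x := by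
    rw [mul_sub, mul_neg, mul_neg, e1, e2]; abel
  rw [expand] at key
  have hkey2 : f (x ^ 2) = (1 + x) ^ n * f x - x ^ n * f x - f x :=
    eq_sub_of_add_eq (by rw [add_comm]; exact key)
  rw [hkey2, sub_mul, sub_mul, one_mul]
end

section
/- Let D be a noncommutative division ring with char D = p > 2, and let n > 2 be an integer with (p−1) dividing (n−2). Suppose f : D → D is an additive map satisfying f(x) = −xⁿ·f(x⁻¹) for all nonzero x ∈ D. Then for all a, b ∈ D with ab = ba, one has ((1+ab)ⁿ + (1−ab)ⁿ − 2·(ab)ⁿ − 2)·f(a) = 0. -/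
/-- Let `D` be a noncommutative division ring with `char D = p > 2` and `n > 2` with
`p − 1 ∣ n − 2`. If the additive map `f : D → D` satisfies `f(x) = −xⁿ f(x⁻¹)` for all
`x ∈ D^×`, then `((1+ab)ⁿ + (1−ab)ⁿ − 2(ab)ⁿ − 2)·f(a) = 0` for all commuting
`a, b ∈ D`. -/
theorem lem4ii (D : Type*) [DivisionRing D]
    (hnc : ∃ a b : D, a * b ≠ b * a)
    (p : ℕ) (hp : p.Prime) (hp2 : 2 < p) [CharP D p]
    (n : ℕ) (hn : 2 < n) (hdvd : (p - 1) ∣ (n - 2))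
    (f : D → D)
    (hf : ∀ x y : D, f (x + y) = f x + f y)
    (hff : ∀ x : D, x ≠ 0 → f x = -(x ^ n * f x⁻¹)) :
    ∀ a b : D, a * b = b * a →
      ((1 + a * b) ^ n + (1 - a * b) ^ n - 2 * (a * b) ^ n - 2) * f a = 0 := by
  intro a b hab
  have hn0 : n ≠ 0 := by omega
  -- basic consequences of additivity
  have hf0 : f 0 = 0 := by
    have h := hf 0 0
    simp only [add_zero] at h
    exact (left_eq_add.mp h)
  have hfneg : ∀ x : D, f (-x) = -f x := by
    intro x
    have h := hf x (-x)
    rw [add_neg_cancel, hf0] at h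
    exact (neg_eq_of_add_eq_zero_right h.symm).symm
  have hfsub : ∀ x y : D, f (x - y) = f x - f y := by
    intro x y
    rw [sub_eq_add_neg, hf, hfneg, ← sub_eq_add_neg]
  -- n is even
  haveI : Fact p.Prime := ⟨hp⟩
  have hpodd : Odd p := hp.odd_of_ne_two (by omega)
  have hevn : Even n := by
    have h1 : Even (p - 1) := Nat.Odd.sub_odd hpodd odd_one
    have h2 : 2 ∣ n - 2 := dvd_trans h1.two_dvd hdvd
    rw [Nat.even_iff]
    omega
  -- 2^n = 4 in D
  have h2four : (2 : D) ^ n = 4 := by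
    have h2p : ((2 : ℕ) : ZMod p) ≠ 0 := by
      intro h
      have hd := (ZMod.natCast_eq_zero_iff 2 p).mp h
      have := Nat.le_of_dvd (by norm_num) hd
      omega
    have hfe : ((2 : ℕ) : ZMod p) ^ (p - 1) = 1 := ZMod.pow_card_sub_one_eq_one h2p
    have hge : 1 ≤ 2 ^ (p - 1) := Nat.one_le_two_pow
    have hdvd1 : p ∣ 2 ^ (p - 1) - 1 := by
      have hz : ((2 ^ (p - 1) - 1 : ℕ) : ZMod p) = 0 := by
        rw [Nat.cast_sub hge]
        push_cast
        push_cast at hfe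
        rw [hfe, sub_self]
      exact (ZMod.natCast_eq_zero_iff _ p).mp hz
    have hD1 : (2 : D) ^ (p - 1) = 1 := by
      have hz := (CharP.cast_eq_zero_iff D p _).mpr hdvd1
      rw [Nat.cast_sub hge] at hz
      push_cast at hz
      exact sub_eq_zero.mp hz
    obtain ⟨k, hk⟩ := hdvd
    have hn2 : (2 : D) ^ (n - 2) = 1 := by rw [hk, pow_mul, hD1, one_pow]
    have hne : n = (n - 2) + 2 := by omega
    rw [hne, pow_add, hn2, one_mul]
    norm_num
  by_cases ha : a = 0
  · subst ha
    simp [hf0]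
  by_cases hb : b = 0
  · subst hb
    simp only [mul_zero, add_zero, sub_zero, one_pow, zero_pow hn0]
    norm_num
  by_cases hs0 : 1 + a * b = 0
  · have hab1 : a * b = -1 := by
      have h := hs0
      rw [add_comm, add_eq_zero_iff_eq_neg] at h
      exact h
    rw [hab1, show (1 : D) + -1 = 0 from by norm_num, show (1 : D) - -1 = 2 from by norm_num,
      zero_pow hn0, hevn.neg_one_pow, h2four]
    norm_num
  by_cases ht0 : 1 - a * b = 0
  · have hab1 : a * b = 1 := (sub_eq_zero.mp ht0).symm
    rw [hab1, show (1 : D) + 1 = 2 from by norm_num, show (1 : D) - 1 = 0 from by norm_num,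
      one_pow, zero_pow hn0, h2four]
    norm_num
  -- main case
  set c := a * b with hc_def
  set s := 1 + c with hs_def
  set t := 1 - c with ht_def
  have hs' : s ≠ 0 := hs0
  have ht' : t ≠ 0 := ht0
  -- commute facts
  have Cab : Commute a b := hab
  have Cbc : Commute b c := by rw [hc_def]; exact Cab.symm.mul_right (Commute.refl b)
  have Cac : Commute a c := by rw [hc_def]; exact (Commute.refl a).mul_right Cab
  have Cbs : Commute b s := by rw [hs_def]; exact (Commute.one_right b).add_right Cbc
  have Cbt : Commute b t := by rw [ht_def]; exact (Commute.one_right b).sub_right Cbc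
  have Cas : Commute a s := by rw [hs_def]; exact (Commute.one_right a).add_right Cac
  have Cat : Commute a t := by rw [ht_def]; exact (Commute.one_right a).sub_right Cac
  have Ccs : Commute c s := by rw [hs_def]; exact (Commute.one_right c).add_right (Commute.refl c)
  have Cct : Commute c t := by rw [ht_def]; exact (Commute.one_right c).sub_right (Commute.refl c)
  -- element identities
  have h3 : c * a⁻¹ = b := by
    rw [hab, mul_assoc, mul_inv_cancel₀ ha, mul_one]
  have K1 : s * b⁻¹ = a + b⁻¹ := by
    rw [hs_def, hc_def, add_mul, one_mul, mul_assoc, mul_inv_cancel₀ hb, mul_one, add_comm]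
  have K2 : t * b⁻¹ = b⁻¹ - a := by
    rw [ht_def, hc_def, sub_mul, one_mul, mul_assoc, mul_inv_cancel₀ hb, mul_one]
  have K3 : (s * b⁻¹)⁻¹ = a⁻¹ - (a * s)⁻¹ := by
    rw [mul_inv_rev, inv_inv, mul_inv_rev]
    have h2 : s * a⁻¹ - a⁻¹ = c * a⁻¹ := by
      rw [hs_def, add_mul, one_mul, add_sub_cancel_left]
    calc b * s⁻¹ = s⁻¹ * b := (Cbs.inv_right₀).eq
      _ = s⁻¹ * (s * a⁻¹ - a⁻¹) := by rw [h2, h3]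
      _ = a⁻¹ - s⁻¹ * a⁻¹ := by rw [mul_sub, ← mul_assoc, inv_mul_cancel₀ hs', one_mul]
  have K4 : (t * b⁻¹)⁻¹ = (a * t)⁻¹ - a⁻¹ := by
    rw [mul_inv_rev, inv_inv, mul_inv_rev]
    have h2 : a⁻¹ - t * a⁻¹ = c * a⁻¹ := by
      rw [ht_def, sub_mul, one_mul, sub_sub_cancel]
    calc b * t⁻¹ = t⁻¹ * b := (Cbt.inv_right₀).eq
      _ = t⁻¹ * (a⁻¹ - t * a⁻¹) := by rw [h2, h3]
      _ = t⁻¹ * a⁻¹ - a⁻¹ := by rw [mul_sub, ← mul_assoc, inv_mul_cancel₀ ht', one_mul]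
  have K5 : a * s = a + a * c := by rw [hs_def, mul_add, mul_one]
  have K6 : a * t = a - a * c := by rw [ht_def, mul_sub, mul_one]
  -- coefficient identities
  have P1 : c ^ n * (s * b⁻¹) ^ n = s ^ n * a ^ n := by
    have hcm : Commute c (s * b⁻¹) := Ccs.mul_right (Cbc.symm.inv_right₀)
    rw [← hcm.mul_pow]
    have hinner : c * (s * b⁻¹) = s * a := by
      rw [← mul_assoc, Ccs.eq, mul_assoc, hc_def, mul_assoc, mul_inv_cancel₀ hb, mul_one]
    rw [hinner, Cas.symm.mul_pow]
  have P2 : c ^ n * (t * b⁻¹) ^ n = t ^ n * a ^ n := by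
    have hcm : Commute c (t * b⁻¹) := Cct.mul_right (Cbc.symm.inv_right₀)
    rw [← hcm.mul_pow]
    have hinner : c * (t * b⁻¹) = t * a := by
      rw [← mul_assoc, Cct.eq, mul_assoc, hc_def, mul_assoc, mul_inv_cancel₀ hb, mul_one]
    rw [hinner, Cat.symm.mul_pow]
  have R1 : s ^ n * a ^ n * a⁻¹ ^ n = s ^ n := by
    rw [inv_pow, mul_assoc, mul_inv_cancel₀ (pow_ne_zero n ha), mul_one]
  have R2 : s ^ n * a ^ n * ((a * s)⁻¹) ^ n = 1 := by
    rw [inv_pow, Cas.mul_pow, (Cas.pow_pow n n).eq,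
      mul_inv_cancel₀ (mul_ne_zero (pow_ne_zero n hs') (pow_ne_zero n ha))]
  have R3 : t ^ n * a ^ n * a⁻¹ ^ n = t ^ n := by
    rw [inv_pow, mul_assoc, mul_inv_cancel₀ (pow_ne_zero n ha), mul_one]
  have R4 : t ^ n * a ^ n * ((a * t)⁻¹) ^ n = 1 := by
    rw [inv_pow, Cat.mul_pow, (Cat.pow_pow n n).eq,
      mul_inv_cancel₀ (mul_ne_zero (pow_ne_zero n ht') (pow_ne_zero n ha))]
  -- f-value equations
  have hfa : f a⁻¹ = -(a⁻¹ ^ n * f a) := by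
    have h := hff a⁻¹ (inv_ne_zero ha)
    rwa [inv_inv] at h
  have hfas : f ((a * s)⁻¹) = -(((a * s)⁻¹) ^ n * (f a + f (a * c))) := by
    have h := hff (a * s)⁻¹ (inv_ne_zero (mul_ne_zero ha hs'))
    rw [inv_inv] at h
    have hstep : f (a * s) = f a + f (a * c) := by rw [K5, hf]
    rwa [hstep] at h
  have hfat : f ((a * t)⁻¹) = -(((a * t)⁻¹) ^ n * (f a - f (a * c))) := by
    have h := hff (a * t)⁻¹ (inv_ne_zero (mul_ne_zero ha ht'))
    rw [inv_inv] at h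
    have hstep : f (a * t) = f a - f (a * c) := by rw [K6, hfsub]
    rwa [hstep] at h
  have hsb : s * b⁻¹ ≠ 0 := mul_ne_zero hs' (inv_ne_zero hb)
  have htb : t * b⁻¹ ≠ 0 := mul_ne_zero ht' (inv_ne_zero hb)
  have hL1 : f (s * b⁻¹) = f a + f b⁻¹ := by rw [K1, hf]
  have hL2 : f (t * b⁻¹) = f b⁻¹ - f a := by rw [K2, hfsub]
  have E1 : c ^ n * f a + c ^ n * f b⁻¹ = s ^ n * f a - f a - f (a * c) := by
    have h := hff (s * b⁻¹) hsb
    rw [K3, hfsub, hfa, hfas] at h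
    calc c ^ n * f a + c ^ n * f b⁻¹
        = c ^ n * (f a + f b⁻¹) := by rw [mul_add]
      _ = c ^ n * f (s * b⁻¹) := by rw [hL1]
      _ = c ^ n * -((s * b⁻¹) ^ n *
            (-(a⁻¹ ^ n * f a) - -(((a * s)⁻¹) ^ n * (f a + f (a * c))))) := by rw [h]
      _ = (c ^ n * (s * b⁻¹) ^ n) * (a⁻¹ ^ n * f a)
            - (c ^ n * (s * b⁻¹) ^ n) * (((a * s)⁻¹) ^ n * (f a + f (a * c))) := by
          noncomm_ring
      _ = (s ^ n * a ^ n) * (a⁻¹ ^ n * f a)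
            - (s ^ n * a ^ n) * (((a * s)⁻¹) ^ n * (f a + f (a * c))) := by rw [P1]
      _ = (s ^ n * a ^ n * a⁻¹ ^ n) * f a
            - (s ^ n * a ^ n * ((a * s)⁻¹) ^ n) * (f a + f (a * c)) := by
          rw [← mul_assoc (s ^ n * a ^ n) (a⁻¹ ^ n) (f a),
            ← mul_assoc (s ^ n * a ^ n) (((a * s)⁻¹) ^ n) (f a + f (a * c))]
      _ = s ^ n * f a - f a - f (a * c) := by
          rw [R1, R2, one_mul, sub_add_eq_sub_sub]
  have E2 : c ^ n * f b⁻¹ - c ^ n * f a = f a - f (a * c) - t ^ n * f a := by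
    have h := hff (t * b⁻¹) htb
    rw [K4, hfsub, hfa, hfat] at h
    calc c ^ n * f b⁻¹ - c ^ n * f a
        = c ^ n * (f b⁻¹ - f a) := by rw [mul_sub]
      _ = c ^ n * f (t * b⁻¹) := by rw [hL2]
      _ = c ^ n * -((t * b⁻¹) ^ n *
            (-(((a * t)⁻¹) ^ n * (f a - f (a * c))) - -(a⁻¹ ^ n * f a))) := by rw [h]
      _ = (c ^ n * (t * b⁻¹) ^ n) * (((a * t)⁻¹) ^ n * (f a - f (a * c)))
            - (c ^ n * (t * b⁻¹) ^ n) * (a⁻¹ ^ n * f a) := by noncomm_ring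
      _ = (t ^ n * a ^ n) * (((a * t)⁻¹) ^ n * (f a - f (a * c)))
            - (t ^ n * a ^ n) * (a⁻¹ ^ n * f a) := by rw [P2]
      _ = (t ^ n * a ^ n * ((a * t)⁻¹) ^ n) * (f a - f (a * c))
            - (t ^ n * a ^ n * a⁻¹ ^ n) * f a := by
          rw [← mul_assoc (t ^ n * a ^ n) (((a * t)⁻¹) ^ n) (f a - f (a * c)),
            ← mul_assoc (t ^ n * a ^ n) (a⁻¹ ^ n) (f a)]
      _ = f a - f (a * c) - t ^ n * f a := by rw [R4, R3, one_mul]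
  have final : (s ^ n + t ^ n - 2 * c ^ n - 2) * f a =
      ((s ^ n * f a - f a - f (a * c)) - (f a - f (a * c) - t ^ n * f a))
        - ((c ^ n * f a + c ^ n * f b⁻¹) - (c ^ n * f b⁻¹ - c ^ n * f a)) := by
    noncomm_ring
  rw [← E1, ← E2, sub_self] at final
  exact final
end

section
/- Let D be a noncommutative division ring with char D = p > 2, and suppose n = p^(ℓ+m) + p^ℓ for some integers ℓ ≥ 0 and m > 0. Let f : D → D be an additive map satisfying f(x) = −xⁿ·f(x⁻¹) for all nonzero x ∈ D. Then either f = 0, or p^m is a positive power of the cardinality of Z(D), i.e., Z(D) is a finite field and there exists an integer r ≥ 1 with |Z(D)|^r = p^m. -/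
set_option linter.unusedVariables false
set_option linter.unusedSectionVars false

namespace Lem7Aux

variable {D : Type*} [DivisionRing D]

lemma conj_pow'' (a b : D) (ha : a ≠ 0) (n : ℕ) : (a * b * a⁻¹) ^ n = a * b ^ n * a⁻¹ := by
  induction n with
  | zero => simp [mul_inv_cancel₀ ha]
  | succ k ih =>
    rw [pow_succ, ih, pow_succ]
    rw [mul_assoc (a * b ^ k) a⁻¹ (a * b * a⁻¹), ← mul_assoc a⁻¹ (a * b) a⁻¹,
      ← mul_assoc a⁻¹ a b, inv_mul_cancel₀ ha, one_mul]
    noncomm_ring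

lemma hua_aux (a b : D) (ha : a ≠ 0) (hb : b ≠ 0) (hba : b⁻¹ - a ≠ 0) :
    (a - a * b * a) * (a⁻¹ + (b⁻¹ - a)⁻¹) = 1 := by
  have h2 : a - a * b * a = a * b * (b⁻¹ - a) := by
    rw [mul_sub, mul_assoc a b b⁻¹, mul_inv_cancel₀ hb, mul_one]
  have h1 : (a - a * b * a) * a⁻¹ = 1 - a * b := by
    rw [sub_mul, mul_inv_cancel₀ ha, mul_assoc (a*b) a a⁻¹, mul_inv_cancel₀ ha, mul_one]
  have h3 : (a - a * b * a) * (b⁻¹ - a)⁻¹ = a * b := by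
    rw [h2, mul_assoc, mul_inv_cancel₀ hba, mul_one]
  rw [mul_add, h1, h3, sub_add_cancel]

variable {t : ℕ}

lemma sub_pow_t (hadd : ∀ x y : D, (x + y) ^ t = x ^ t + y ^ t) (x y : D) :
    (x - y) ^ t = x ^ t - y ^ t := by
  have := hadd (x - y) y
  rw [sub_add_cancel] at this
  rw [eq_sub_of_add_eq this.symm]

lemma pow_t_inj (ht : t ≠ 0) (hadd : ∀ x y : D, (x + y) ^ t = x ^ t + y ^ t) {x y : D}
    (h : x ^ t = y ^ t) : x = y := by
  have h2 := sub_pow_t hadd x y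
  rw [h, sub_self] at h2
  exact sub_eq_zero.mp ((pow_eq_zero_iff ht).mp h2)

lemma triple_pow (ht : t ≠ 0) (hadd : ∀ x y : D, (x + y) ^ t = x ^ t + y ^ t)
    (a b : D) : (a * b * a) ^ t = a ^ t * b ^ t * a ^ t := by
  by_cases ha : a = 0
  · simp [ha, zero_pow ht]
  by_cases hb : b = 0
  · simp [hb, zero_pow ht]
  by_cases hba : b⁻¹ = a
  · subst hba
    rw [inv_mul_cancel₀ hb, one_mul, inv_pow, inv_mul_cancel₀ (pow_ne_zero _ hb), one_mul]
  have hsub : b⁻¹ - a ≠ 0 := sub_ne_zero.mpr hba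
  have key := hua_aux a b ha hb hsub
  set s := a⁻¹ + (b⁻¹ - a)⁻¹ with hs_def
  have hsinv : a - a * b * a = s⁻¹ := eq_inv_of_mul_eq_one_left key
  have hA : a ^ t ≠ 0 := pow_ne_zero _ ha
  have hB : b ^ t ≠ 0 := pow_ne_zero _ hb
  have hBsub : (b ^ t)⁻¹ - a ^ t = (b⁻¹ - a) ^ t := by
    rw [sub_pow_t hadd, inv_pow]
  have hBA : (b ^ t)⁻¹ - a ^ t ≠ 0 := by
    rw [hBsub]; exact pow_ne_zero _ hsub
  have key2 := hua_aux (a ^ t) (b ^ t) hA hB hBA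
  have hS : (a ^ t)⁻¹ + ((b ^ t)⁻¹ - a ^ t)⁻¹ = s ^ t := by
    rw [hs_def, hadd, inv_pow, hBsub, inv_pow]
  rw [hS] at key2
  have hfin : a ^ t - a ^ t * b ^ t * a ^ t = (s ^ t)⁻¹ := eq_inv_of_mul_eq_one_left key2
  rw [← inv_pow, ← hsinv, sub_pow_t hadd] at hfin
  exact (sub_right_inj.mp hfin).symm

lemma triple_lin (ht : t ≠ 0) (hadd : ∀ x y : D, (x + y) ^ t = x ^ t + y ^ t)
    (a x b : D) : (a * x * b + b * x * a) ^ t = a ^ t * x ^ t * b ^ t + b ^ t * x ^ t * a ^ t := by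
  have h := triple_pow ht hadd (a + b) x
  have e1 : (a + b) * x * (a + b) = a * x * a + (a * x * b + b * x * a) + b * x * b := by
    noncomm_ring
  have e2 : (a + b) ^ t * x ^ t * (a + b) ^ t
      = a ^ t * x ^ t * a ^ t + (a ^ t * x ^ t * b ^ t + b ^ t * x ^ t * a ^ t)
        + b ^ t * x ^ t * b ^ t := by
    rw [hadd]; noncomm_ring
  rw [e1, e2, hadd, hadd, triple_pow ht hadd a x, triple_pow ht hadd b x] at h
  exact add_left_cancel (add_right_cancel h)

lemma jr (ht : t ≠ 0) (hadd : ∀ x y : D, (x + y) ^ t = x ^ t + y ^ t) (a b : D) :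
    ((a * b) ^ t - a ^ t * b ^ t) * ((a * b) ^ t - b ^ t * a ^ t) = 0 := by
  have h1 : (a * b * (a * b)) ^ t = (a * b) ^ t * (a * b) ^ t := by
    rw [← sq, ← pow_mul, mul_comm 2 t, pow_mul, sq]
  have h2 : (a * (b * b) * a) ^ t = a ^ t * (b ^ t * b ^ t) * a ^ t := by
    rw [triple_pow ht hadd, ← sq, ← pow_mul, mul_comm 2 t, pow_mul, sq]
  have h3 := triple_lin ht hadd a b (a * b)
  have h4 : a * b * (a * b) + a * (b * b) * a = a * b * (a * b) + (a * b) * b * a := by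
    noncomm_ring
  have h5 : (a * b * (a * b)) ^ t + (a * (b * b) * a) ^ t
      = a ^ t * b ^ t * (a * b) ^ t + (a * b) ^ t * b ^ t * a ^ t := by
    rw [← hadd, h4]; exact h3
  rw [h1, h2] at h5
  have expand : ((a * b) ^ t - a ^ t * b ^ t) * ((a * b) ^ t - b ^ t * a ^ t)
      = ((a * b) ^ t * (a * b) ^ t + a ^ t * (b ^ t * b ^ t) * a ^ t)
        - (a ^ t * b ^ t * (a * b) ^ t + (a * b) ^ t * b ^ t * a ^ t) := by
    noncomm_ring
  rw [expand, h5, sub_self]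

lemma hom_or_anti (hadd : ∀ x y : D, (x + y) ^ t = x ^ t + y ^ t)
    (pairwise : ∀ a b : D, (a * b) ^ t = a ^ t * b ^ t ∨ (a * b) ^ t = b ^ t * a ^ t) :
    (∀ a b : D, (a * b) ^ t = a ^ t * b ^ t) ∨ (∀ a b : D, (a * b) ^ t = b ^ t * a ^ t) := by
  have stepA : ∀ a : D, (∀ b : D, (a * b) ^ t = a ^ t * b ^ t)
      ∨ (∀ b : D, (a * b) ^ t = b ^ t * a ^ t) := by
    intro a
    by_contra hcon
    push_neg at hcon
    obtain ⟨⟨b₁, hb₁⟩, ⟨b₂, hb₂⟩⟩ := hcon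
    have hψ1 : (a * b₁) ^ t = b₁ ^ t * a ^ t := (pairwise a b₁).resolve_left hb₁
    have hφ2 : (a * b₂) ^ t = a ^ t * b₂ ^ t := (pairwise a b₂).resolve_right hb₂
    have hsum : (a * (b₁ + b₂)) ^ t = (a * b₁) ^ t + (a * b₂) ^ t := by
      rw [mul_add, hadd]
    rcases pairwise a (b₁ + b₂) with h | h
    · rw [hsum, hadd, mul_add, hφ2] at h
      exact hb₁ (add_right_cancel h)
    · rw [hsum, hadd, add_mul, hψ1] at h
      exact hb₂ (add_left_cancel h)
  by_contra hcon
  push_neg at hcon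
  obtain ⟨⟨a₁, b₁, hb₁⟩, ⟨a₂, b₂, hb₂⟩⟩ := hcon
  have hψ1 : ∀ b : D, (a₁ * b) ^ t = b ^ t * a₁ ^ t := by
    rcases stepA a₁ with h | h
    · exact absurd (h b₁) hb₁
    · exact h
  have hφ2 : ∀ b : D, (a₂ * b) ^ t = a₂ ^ t * b ^ t := by
    rcases stepA a₂ with h | h
    · exact h
    · exact absurd (h b₂) hb₂
  have hsum : ∀ b : D, ((a₁ + a₂) * b) ^ t = (a₁ * b) ^ t + (a₂ * b) ^ t := by
    intro b; rw [add_mul, hadd]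
  rcases stepA (a₁ + a₂) with h | h
  · have h' := h b₁
    rw [hsum, hadd, add_mul, hφ2 b₁] at h'
    exact hb₁ (add_right_cancel h')
  · have h' := h b₂
    rw [hsum, hadd, mul_add, hψ1 b₂] at h'
    exact hb₂ (add_left_cancel h')

lemma hom_fixed (ht : t ≠ 0) (hodd : Odd t) (hadd : ∀ x y : D, (x + y) ^ t = x ^ t + y ^ t)
    (hnc : ∃ a b : D, a * b ≠ b * a)
    (hom : ∀ a b : D, (a * b) ^ t = a ^ t * b ^ t) :
    ∀ x : D, x ^ t = x := by
  have hC : ∀ a : D, a ≠ 0 → ∀ y : D, Commute (a⁻¹ * a ^ t) (y ^ t) := by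
    intro a ha y
    have h1 : (a * y * a⁻¹) ^ t = a * y ^ t * a⁻¹ := conj_pow'' a y ha t
    have h2 : (a * y * a⁻¹) ^ t = a ^ t * y ^ t * (a ^ t)⁻¹ := by
      rw [hom (a * y) a⁻¹, hom a y, inv_pow]
    have h3 : a⁻¹ * (a * y ^ t * a⁻¹) * a ^ t = a⁻¹ * (a ^ t * y ^ t * (a ^ t)⁻¹) * a ^ t := by
      rw [← h1, ← h2]
    simp only [mul_assoc] at h3
    rw [inv_mul_cancel_left₀ ha, inv_mul_cancel₀ (pow_ne_zero t ha), mul_one] at h3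
    show (a⁻¹ * a ^ t) * y ^ t = y ^ t * (a⁻¹ * a ^ t)
    rw [mul_assoc]
    exact h3.symm
  have hdich : ∀ x : D, (∀ y : D, x * y ^ t = y ^ t * x) ∨ x ^ t = x := by
    intro x
    by_cases hx0 : x = 0
    · right; simp [hx0, zero_pow ht]
    by_cases hx1 : x = -1
    · right; rw [hx1, hodd.neg_one_pow]
    have hx1' : x + 1 ≠ 0 := by
      intro h
      exact hx1 (eq_neg_of_add_eq_zero_left h)
    set c₁ := x⁻¹ * x ^ t with hc₁def
    set c₂ := (x + 1)⁻¹ * (x + 1) ^ t with hc₂def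
    have hc₁ : ∀ y : D, Commute c₁ (y ^ t) := hC x hx0
    have hc₂ : ∀ y : D, Commute c₂ (y ^ t) := hC (x + 1) hx1'
    have e1 : x * c₁ = x ^ t := by
      rw [hc₁def, ← mul_assoc, mul_inv_cancel₀ hx0, one_mul]
    have e2 : (x + 1) * c₂ = x ^ t + 1 := by
      rw [hc₂def, ← mul_assoc, mul_inv_cancel₀ hx1', one_mul, hadd, one_pow]
    by_cases hcc : c₂ = c₁
    · right
      rw [hcc] at e2
      have h4 : x * c₁ + c₁ = x ^ t + 1 := by rw [← e2]; noncomm_ring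
      rw [e1] at h4
      have hc1 : c₁ = 1 := add_left_cancel h4
      rw [hc1, mul_one] at e1
      exact e1.symm
    · left
      have ex : x * (c₂ - c₁) = 1 - c₂ := by
        have h5 : x * c₂ = (x + 1) * c₂ - c₂ := by noncomm_ring
        rw [mul_sub, e1, h5, e2]
        abel
      have hcc' : c₂ - c₁ ≠ 0 := sub_ne_zero.mpr hcc
      have hxeq : x = (1 - c₂) * (c₂ - c₁)⁻¹ := by
        rw [eq_mul_inv_iff_mul_eq₀ hcc']
        exact ex
      intro y
      have K : Commute ((1 - c₂) * (c₂ - c₁)⁻¹) (y ^ t) := by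
        apply Commute.mul_left
        · exact ((Commute.one_left (y ^ t)).sub_left (hc₂ y))
        · exact ((hc₂ y).sub_left (hc₁ y)).inv_left₀
      rw [hxeq]
      exact K.eq
  by_cases hall : ∀ x y : D, x * y ^ t = y ^ t * x
  · exfalso
    obtain ⟨a, b, hab⟩ := hnc
    have h1 : (a * b) ^ t = (b * a) ^ t := by
      rw [hom, hom]
      exact hall (a ^ t) b
    exact hab (pow_t_inj ht hadd h1)
  · push_neg at hall
    obtain ⟨w0, y0, hw0⟩ := hall
    have hw0t : w0 ^ t = w0 := by
      rcases hdich w0 with h | h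
      · exact absurd (h y0) hw0
      · exact h
    intro x
    rcases hdich x with hxC | h
    · rcases hdich (x + w0) with hxwC | h2
      · exfalso
        apply hw0
        calc w0 * y0 ^ t = (x + w0) * y0 ^ t - x * y0 ^ t := by noncomm_ring
          _ = y0 ^ t * (x + w0) - y0 ^ t * x := by rw [hxwC y0, hxC y0]
          _ = y0 ^ t * w0 := by noncomm_ring
      · rw [hadd, hw0t] at h2
        exact add_right_cancel h2
    · exact h

lemma anti_fixed (ht : t ≠ 0) (hodd : Odd t) (hadd : ∀ x y : D, (x + y) ^ t = x ^ t + y ^ t)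
    {a b : D} (hab : a * b ≠ b * a)
    (anti : ∀ x y : D, (x * y) ^ t = y ^ t * x ^ t)
    (μ : D) (hμ : ∀ y : D, μ * y = y * μ) : μ ^ t = μ := by
  have step1 : ∀ x : D, x ≠ 0 → ∀ y : D, x ^ (t+1) * y ^ t = y ^ t * x ^ (t+1) := by
    intro x hx y
    have h1 : (x * y * x⁻¹) ^ t = x * y ^ t * x⁻¹ := conj_pow'' x y hx t
    have h2 : (x * y * x⁻¹) ^ t = (x ^ t)⁻¹ * (y ^ t * x ^ t) := by
      rw [anti (x * y) x⁻¹, anti x y, inv_pow]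
    have h3 : x ^ t * (x * y ^ t * x⁻¹) * x = x ^ t * ((x ^ t)⁻¹ * (y ^ t * x ^ t)) * x := by
      rw [← h1, ← h2]
    simp only [mul_assoc] at h3
    rw [inv_mul_cancel₀ hx, mul_one, mul_inv_cancel_left₀ (pow_ne_zero t hx)] at h3
    rw [pow_succ]
    simp only [mul_assoc]
    exact h3
  have step2 : ∀ x y : D, (x ^ t + x) * y ^ t = y ^ t * (x ^ t + x) := by
    intro x y
    by_cases hx0 : x = 0
    · simp [hx0, zero_pow ht]
    by_cases hx1 : x = -1
    · rw [hx1, hodd.neg_one_pow]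
      exact (((Commute.one_left (y ^ t)).neg_left).add_left
        ((Commute.one_left (y ^ t)).neg_left)).eq
    have hx1' : x + 1 ≠ 0 := fun h => hx1 (eq_neg_of_add_eq_zero_left h)
    have k1 := step1 x hx0 y
    have k2 := step1 (x + 1) hx1' y
    have expand : (x + 1) ^ (t + 1) = x ^ (t+1) + (x ^ t + x) + 1 := by
      rw [pow_succ, hadd, one_pow, add_mul, mul_add, mul_add, mul_one, mul_one, one_mul,
        ← pow_succ]
      abel
    rw [expand] at k2
    have k3 : (x ^ t + x) * y ^ t
        = ((x ^ (t+1) + (x ^ t + x) + 1) * y ^ t) - x ^ (t+1) * y ^ t - y ^ t := by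
      noncomm_ring
    rw [k3, k2, k1]
    noncomm_ring
  have step3 : ∀ x y : D, x * y ^ t - y ^ t * x = (x * y - y * x) ^ t := by
    intro x y
    have h := step2 x y
    have h1 : x * y ^ t - y ^ t * x = y ^ t * x ^ t - x ^ t * y ^ t := by
      have h2 : x ^ t * y ^ t + x * y ^ t = y ^ t * x ^ t + y ^ t * x := by
        calc x ^ t * y ^ t + x * y ^ t = (x ^ t + x) * y ^ t := by noncomm_ring
          _ = y ^ t * (x ^ t + x) := h
          _ = y ^ t * x ^ t + y ^ t * x := by noncomm_ring
      calc x * y ^ t - y ^ t * x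
          = (x ^ t * y ^ t + x * y ^ t) - x ^ t * y ^ t - y ^ t * x := by abel
        _ = (y ^ t * x ^ t + y ^ t * x) - x ^ t * y ^ t - y ^ t * x := by rw [h2]
        _ = y ^ t * x ^ t - x ^ t * y ^ t := by abel
    rw [h1, ← anti x y, ← anti y x, ← sub_pow_t hadd]
  have key : ∀ y' : D, a * y' - y' * a = a * b - b * a →
      (a * b - b * a) ^ t * y' = y' ^ t * (a * b - b * a) ^ t := by
    intro y' hy'
    have hcy : y' * y' ^ t = y' ^ t * y' := ((Commute.refl y').pow_right t).eq
    have hst := step3 a y'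
    have l1 : (a * y') * y' ^ t - y' ^ t * (a * y') = (a * y' - y' * a) ^ t * y' := by
      calc (a * y') * y' ^ t - y' ^ t * (a * y')
          = a * (y' * y' ^ t) - (y' ^ t * a) * y' := by noncomm_ring
        _ = a * (y' ^ t * y') - (y' ^ t * a) * y' := by rw [hcy]
        _ = (a * y' ^ t - y' ^ t * a) * y' := by noncomm_ring
        _ = (a * y' - y' * a) ^ t * y' := by rw [hst]
    have l2 : (a * y') * y' ^ t - y' ^ t * (a * y') = ((a * y') * y' - y' * (a * y')) ^ t :=
      step3 (a * y') y'
    have l3 : (a * y') * y' - y' * (a * y') = (a * y' - y' * a) * y' := by noncomm_ring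
    have l4 : ((a * y' - y' * a) * y') ^ t = y' ^ t * (a * y' - y' * a) ^ t := anti _ _
    rw [l2, l3, l4, hy'] at l1
    exact l1.symm
  have hbμ : a * (b + μ) - (b + μ) * a = a * b - b * a := by
    have hμa : a * μ = μ * a := (hμ a).symm
    rw [mul_add, add_mul, hμa]
    abel
  have k1 := key b rfl
  have k2 := key (b + μ) hbμ
  rw [hadd] at k2
  have hcne : (a * b - b * a) ^ t ≠ 0 := pow_ne_zero _ (sub_ne_zero.mpr hab)
  have k3 : (a * b - b * a) ^ t * μ = μ ^ t * (a * b - b * a) ^ t := by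
    have h6 : (a * b - b * a) ^ t * b + (a * b - b * a) ^ t * μ
        = b ^ t * (a * b - b * a) ^ t + μ ^ t * (a * b - b * a) ^ t := by
      calc (a * b - b * a) ^ t * b + (a * b - b * a) ^ t * μ
          = (a * b - b * a) ^ t * (b + μ) := by noncomm_ring
        _ = (b ^ t + μ ^ t) * (a * b - b * a) ^ t := k2
        _ = b ^ t * (a * b - b * a) ^ t + μ ^ t * (a * b - b * a) ^ t := by noncomm_ring
    rw [← k1] at h6
    exact add_left_cancel h6
  have k4 : μ * (a * b - b * a) ^ t = μ ^ t * (a * b - b * a) ^ t := by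
    rw [hμ ((a * b - b * a) ^ t)]
    exact k3
  have k5 : (μ - μ ^ t) * (a * b - b * a) ^ t = 0 := by
    rw [sub_mul, k4, sub_self]
  have k6 := (mul_eq_zero.mp k5).resolve_right hcne
  exact (sub_eq_zero.mp k6).symm

end Lem7Aux

namespace Lem7Aux2
open Polynomial

variable {D : Type*} [DivisionRing D]
variable {f : D → D}

lemma f_zero (hf : ∀ x y : D, f (x + y) = f x + f y) : f 0 = 0 := by
  have h := hf 0 0
  rw [add_zero] at h
  exact left_eq_add.mp h

lemma f_neg (hf : ∀ x y : D, f (x + y) = f x + f y) (x : D) : f (-x) = -f x := by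
  have h := hf x (-x)
  rw [add_neg_cancel, f_zero hf] at h
  exact (neg_eq_of_add_eq_zero_right h.symm).symm

lemma f_sub (hf : ∀ x y : D, f (x + y) = f x + f y) (x y : D) : f (x - y) = f x - f y := by
  rw [sub_eq_add_neg, hf, f_neg hf, sub_eq_add_neg]

lemma f_nat (hf : ∀ x y : D, f (x + y) = f x + f y) (k : ℕ) (z : D) :
    f ((k : D) * z) = (k : D) * f z := by
  induction k with
  | zero => simp [f_zero hf]
  | succ j ih =>
    push_cast
    rw [add_mul, one_mul, hf, ih, add_mul, one_mul]

lemma expand_helper (A B γ δ : D) (h1 : Commute γ A) (h2 : Commute γ B)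
    (h3 : Commute δ A) (h4 : Commute δ B) (h5 : Commute γ δ) :
    (A + γ) * (B + γ) - (A + (γ + δ)) * (B + (γ + δ))
      = -(δ * (A + B + (γ + (γ + δ)))) := by
  have eL : (A + γ) * (B + γ) = A*B + A*γ + γ*B + γ*γ := by noncomm_ring
  have eR : (A + (γ + δ)) * (B + (γ + δ))
      = A*B + A*γ + A*δ + γ*B + δ*B + (γ*γ + γ*δ + δ*γ + δ*δ) := by noncomm_ring
  have eS : -(δ * (A + B + (γ + (γ + δ)))) = -(δ*A + δ*B + (δ*γ + δ*γ + δ*δ)) := by noncomm_ring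
  rw [eL, eR, eS, ← h3.eq, h5.eq]
  abel

section charp
variable (p : ℕ) [Fact p.Prime] [CharP D p]

lemma f_one (hp2 : 2 < p) {n : ℕ}
    (hff : ∀ x : D, x ≠ 0 → f x = -(x ^ n * f x⁻¹)) : f 1 = 0 := by
  have h := hff 1 one_ne_zero
  rw [inv_one, one_pow, one_mul] at h
  have h2 : (2 : D) * f 1 = 0 := by
    rw [two_mul]
    nth_rewrite 1 [h]
    abel
  have h2ne : (2 : D) ≠ 0 := by
    have h3 : ((2 : ℕ) : D) ≠ 0 := by
      rw [Ne, CharP.cast_eq_zero_iff D p 2]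
      intro hdvd
      have := Nat.le_of_dvd (by norm_num) hdvd
      omega
    simpa using h3
  exact (mul_eq_zero.mp h2).resolve_left h2ne

lemma f_cast (hf : ∀ x y : D, f (x + y) = f x + f y) (hp2 : 2 < p) {n : ℕ}
    (hff : ∀ x : D, x ≠ 0 → f x = -(x ^ n * f x⁻¹)) (k : ℕ) : f ((k : D)) = 0 := by
  have h := f_nat hf k 1
  rw [mul_one, f_one p hp2 hff, mul_zero] at h
  exact h

lemma two_pow_char (k : ℕ) : ((2 : ℕ) : D) ^ (p ^ k) = ((2 : ℕ) : D) := by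
  push_cast
  have h : ((1 : D) + 1) ^ (p ^ k) = 1 ^ (p ^ k) + 1 ^ (p ^ k) :=
    add_pow_char_pow_of_commute p k (Commute.one_left 1)
  rw [one_pow] at h
  convert h using 2 <;> norm_num

variable {P Q n : ℕ}

set_option maxHeartbeats 1000000 in
lemma step1_core
    (hf : ∀ x y : D, f (x + y) = f x + f y)
    (hff : ∀ x : D, x ≠ 0 → f x = -(x ^ n * f x⁻¹))
    (hp2 : 2 < p)
    (hn : n = P + Q)
    (x : D) (c c' : ℕ) (hlt : c < c')
    (hu : x + (c : D) ≠ 0) (hv : x + (c' : D) ≠ 0)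
    (hd : ((c' - c : ℕ) : D) ≠ 0)
    (hcP : ((c : ℕ) : D) ^ P = (c : D)) (hcQ : ((c : ℕ) : D) ^ Q = (c : D))
    (hcP' : ((c' : ℕ) : D) ^ P = (c' : D)) (hcQ' : ((c' : ℕ) : D) ^ Q = (c' : D))
    (hPpow : ∀ y z : D, Commute y z → (y + z) ^ P = y ^ P + z ^ P)
    (hQpow : ∀ y z : D, Commute y z → (y + z) ^ Q = y ^ Q + z ^ Q) :
    f (x * x) = (x ^ P + x ^ Q) * f x := by
  set u := x + (c : D) with hudef
  set v := x + (c' : D) with hvdef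
  set d := c' - c with hddef
  have hxc : Commute x ((c : ℕ) : D) := (Nat.cast_commute c x).symm
  have hxc' : Commute x ((c' : ℕ) : D) := (Nat.cast_commute c' x).symm
  have huv : Commute u v :=
    ((Commute.refl x).add_right hxc').add_left ((hxc.symm).add_right (Nat.cast_commute c _))
  have hu_pow : u ^ n = (x ^ P + (c : D)) * (x ^ Q + (c : D)) := by
    rw [hn, pow_add, hPpow x _ hxc, hQpow x _ hxc, hcP, hcQ]
  have hv_pow : v ^ n = (x ^ P + (c' : D)) * (x ^ Q + (c' : D)) := by
    rw [hn, pow_add, hPpow x _ hxc', hQpow x _ hxc', hcP', hcQ']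
  have hfu : f u = f x := by rw [hudef, hf, f_cast p hf hp2 hff, add_zero]
  have hfv : f v = f x := by rw [hvdef, hf, f_cast p hf hp2 hff, add_zero]
  have hfui : f u⁻¹ = -((u ^ n)⁻¹ * f x) := by
    have h := hff u⁻¹ (inv_ne_zero hu)
    rw [inv_inv, inv_pow, hfu] at h
    exact h
  have hfvi : f v⁻¹ = -((v ^ n)⁻¹ * f x) := by
    have h := hff v⁻¹ (inv_ne_zero hv)
    rw [inv_inv, inv_pow, hfv] at h
    exact h
  have hvu : v - u = ((d : ℕ) : D) := by
    rw [hudef, hvdef, hddef]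
    push_cast [le_of_lt hlt]
    abel
  have hdiff : u⁻¹ - v⁻¹ = ((d : ℕ) : D) * (u * v)⁻¹ := by
    have h1 : u⁻¹ - v⁻¹ = u⁻¹ * (v - u) * v⁻¹ := by
      rw [mul_sub, sub_mul, mul_assoc, mul_inv_cancel₀ hv, mul_one, inv_mul_cancel₀ hu, one_mul]
    have h3 : (u * v)⁻¹ = u⁻¹ * v⁻¹ := by rw [huv.eq, mul_inv_rev]
    calc u⁻¹ - v⁻¹ = u⁻¹ * (v - u) * v⁻¹ := h1
      _ = u⁻¹ * ((d : ℕ) : D) * v⁻¹ := by rw [hvu]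
      _ = ((d : ℕ) : D) * u⁻¹ * v⁻¹ := by rw [← (Nat.cast_commute d u⁻¹).eq]
      _ = ((d : ℕ) : D) * (u * v)⁻¹ := by rw [mul_assoc, ← h3]
  have expand : u * v = x * x + ((c + c' : ℕ) : D) * x + ((c * c' : ℕ) : D) := by
    push_cast
    rw [hudef, hvdef, add_mul, mul_add, mul_add, hxc'.eq, add_mul]
    abel
  have key3 : f (u * v) = f (x * x) + ((c + c' : ℕ) : D) * f x := by
    rw [expand, hf, hf, f_nat hf, f_cast p hf hp2 hff, add_zero]
  have huvne : u * v ≠ 0 := mul_ne_zero hu hv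
  have key2 : f ((u*v)⁻¹)
      = -(((u*v) ^ n)⁻¹ * (f (x*x) + ((c + c' : ℕ) : D) * f x)) := by
    have h := hff (u*v)⁻¹ (inv_ne_zero huvne)
    rw [inv_inv, inv_pow, key3] at h
    exact h
  have key1 : f u⁻¹ - f v⁻¹ = ((d:ℕ) : D) * f ((u*v)⁻¹) := by
    rw [← f_sub hf, hdiff, f_nat hf]
  have E : (v ^ n)⁻¹ * f x - (u ^ n)⁻¹ * f x
      = -(((d:ℕ):D) * (((u*v) ^ n)⁻¹ * (f (x*x) + ((c + c' : ℕ) : D) * f x))) := by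
    have h := key1
    rw [hfui, hfvi, key2, mul_neg, neg_sub_neg] at h
    exact h
  have hun : u ^ n ≠ 0 := pow_ne_zero _ hu
  have hvn : v ^ n ≠ 0 := pow_ne_zero _ hv
  have huvn : (u*v) ^ n ≠ 0 := pow_ne_zero _ huvne
  have hpowmul : (u * v) ^ n = u ^ n * v ^ n := huv.mul_pow n
  have hcn : Commute (u ^ n) (v ^ n) := huv.pow_pow n n
  have E2 := congrArg (fun z => u ^ n * v ^ n * z) E
  rw [mul_sub] at E2
  have l1 : u ^ n * v ^ n * ((v ^ n)⁻¹ * f x) = u ^ n * f x := by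
    rw [mul_assoc, mul_inv_cancel_left₀ hvn]
  have l2 : u ^ n * v ^ n * ((u ^ n)⁻¹ * f x) = v ^ n * f x := by
    rw [hcn.eq, mul_assoc, mul_inv_cancel_left₀ hun]
  rw [l1, l2] at E2
  have l3 : u ^ n * v ^ n
        * -((((d:ℕ)):D) * (((u*v) ^ n)⁻¹ * (f (x*x) + ((c + c':ℕ):D) * f x)))
      = -(((d:ℕ):D) * (f (x*x) + ((c + c':ℕ):D) * f x)) := by
    rw [mul_neg, ← hpowmul, ← mul_assoc, ← (Nat.cast_commute d ((u*v)^n)).eq, mul_assoc,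
      mul_inv_cancel_left₀ huvn]
  rw [l3] at E2
  have hc'c : ((c' : ℕ) : D) = ((c:ℕ):D) + ((d:ℕ):D) := by
    rw [← Nat.cast_add]
    congr 1
    omega
  have hsum_cast : ((c + c' : ℕ) : D) = ((c:ℕ):D) + (((c:ℕ):D) + ((d:ℕ):D)) := by
    push_cast
    rw [← Nat.cast_add, ← Nat.cast_add, ← Nat.cast_add]
    congr 1
    omega
  have hsub_pow : u ^ n - v ^ n
      = -(((d:ℕ):D) * (x ^ P + x ^ Q + ((c + c' : ℕ) : D))) := by
    rw [hu_pow, hv_pow, hc'c, hsum_cast]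
    exact expand_helper (x^P) (x^Q) ((c:ℕ):D) ((d:ℕ):D)
      (Nat.cast_commute c _) (Nat.cast_commute c _) (Nat.cast_commute d _) (Nat.cast_commute d _)
      (Nat.cast_commute c _)
  have E3 : -( ((d:ℕ):D) * ((x ^ P + x ^ Q + ((c + c':ℕ):D)) * f x))
      = -(((d:ℕ):D) * (f (x*x) + ((c + c':ℕ):D) * f x)) := by
    calc -( ((d:ℕ):D) * ((x ^ P + x ^ Q + ((c + c':ℕ):D)) * f x))
        = (-(((d:ℕ):D) * (x ^ P + x ^ Q + ((c + c':ℕ):D)))) * f x := by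
          rw [neg_mul, mul_assoc]
      _ = (u ^ n - v ^ n) * f x := by rw [← hsub_pow]
      _ = u ^ n * f x - v ^ n * f x := sub_mul _ _ _
      _ = -(((d:ℕ):D) * (f (x*x) + ((c + c':ℕ):D) * f x)) := E2
  have E4 := neg_inj.mp E3
  have E5 := mul_left_cancel₀ hd E4
  have E6 : (x^P + x^Q) * f x + ((c+c':ℕ):D) * f x
      = f (x*x) + ((c+c':ℕ):D) * f x := by
    rw [← add_mul]
    exact E5
  exact (add_right_cancel E6).symm


lemma step1_all
    (hf : ∀ x y : D, f (x + y) = f x + f y)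
    (hff : ∀ x : D, x ≠ 0 → f x = -(x ^ n * f x⁻¹))
    (hp2 : 2 < p) {ℓ m : ℕ}
    (hn : n = p ^ (ℓ + m) + p ^ ℓ) :
    ∀ x : D, f (x * x) = (x ^ (p ^ (ℓ + m)) + x ^ (p ^ ℓ)) * f x := by
  intro x
  have hppos : 0 < p := by omega
  have hP0 : p ^ (ℓ + m) ≠ 0 := (Nat.pow_pos hppos).ne'
  have hQ0 : p ^ ℓ ≠ 0 := (Nat.pow_pos hppos).ne'
  have hPpow : ∀ y z : D, Commute y z → (y + z) ^ (p ^ (ℓ + m)) = y ^ (p ^ (ℓ+m)) + z ^ (p ^ (ℓ+m)) :=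
    fun y z h => add_pow_char_pow_of_commute p (ℓ + m) h
  have hQpow : ∀ y z : D, Commute y z → (y + z) ^ (p ^ ℓ) = y ^ (p ^ ℓ) + z ^ (p ^ ℓ) :=
    fun y z h => add_pow_char_pow_of_commute p ℓ h
  have h2D : ((2:ℕ) : D) ≠ 0 := by
    rw [Ne, CharP.cast_eq_zero_iff D p 2]
    intro hdvd
    have := Nat.le_of_dvd (by norm_num) hdvd
    omega
  have h0P : ((0:ℕ) : D) ^ (p ^ (ℓ+m)) = ((0:ℕ) : D) := by
    rw [Nat.cast_zero, zero_pow hP0]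
  have h0Q : ((0:ℕ) : D) ^ (p ^ ℓ) = ((0:ℕ) : D) := by
    rw [Nat.cast_zero, zero_pow hQ0]
  have h1P : ((1:ℕ) : D) ^ (p ^ (ℓ+m)) = ((1:ℕ) : D) := by norm_num
  have h1Q : ((1:ℕ) : D) ^ (p ^ ℓ) = ((1:ℕ) : D) := by norm_num
  by_cases hx0 : x = 0
  · rw [hx0, mul_zero, f_zero hf, mul_zero]
  by_cases hx1 : x + 1 = 0
  · have hu : x + ((0:ℕ) : D) ≠ 0 := by simpa using hx0
    have hv : x + ((2:ℕ) : D) ≠ 0 := by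
      have h4 : x + ((2:ℕ) : D) = (x + 1) + 1 := by
        push_cast
        rw [← one_add_one_eq_two, ← add_assoc]
      rw [h4, hx1, zero_add]
      exact one_ne_zero
    have hd : ((2 - 0 : ℕ) : D) ≠ 0 := by simpa using h2D
    exact step1_core p hf hff hp2 hn x 0 2 (by norm_num) hu hv hd h0P h0Q
      (two_pow_char p (ℓ+m)) (two_pow_char p ℓ) hPpow hQpow
  · have hu : x + ((0:ℕ) : D) ≠ 0 := by simpa using hx0
    have hv : x + ((1:ℕ) : D) ≠ 0 := by simpa using hx1
    have hd : ((1 - 0 : ℕ) : D) ≠ 0 := by norm_num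
    exact step1_core p hf hff hp2 hn x 0 1 (by norm_num) hu hv hd h0P h0Q h1P h1Q hPpow hQpow

end charp

section abstractPQ
variable {P Q : ℕ}

lemma sharp
    (hf : ∀ x y : D, f (x + y) = f x + f y)
    (hstep : ∀ x : D, f (x * x) = (x ^ P + x ^ Q) * f x)
    (hPpow : ∀ y z : D, Commute y z → (y + z) ^ P = y ^ P + z ^ P)
    (hQpow : ∀ y z : D, Commute y z → (y + z) ^ Q = y ^ Q + z ^ Q)
    (μ : D) (hμ : ∀ y : D, μ * y = y * μ) (x : D) :
    f (μ * x) + f (μ * x) = (μ ^ P + μ ^ Q) * f x + (x ^ P + x ^ Q) * f μ := by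
  have hxμ : Commute x μ := (hμ x).symm
  have expand : (x + μ) * (x + μ) = x*x + (μ*x + μ*x) + μ*μ := by
    rw [add_mul, mul_add, mul_add, ← hμ x]
    abel
  have h1 := hstep (x + μ)
  rw [expand, hf, hf, hf, hstep x, hstep μ, hPpow x μ hxμ, hQpow x μ hxμ, hf x μ] at h1
  have h2 : (x ^ P + μ ^ P + (x ^ Q + μ ^ Q)) * (f x + f μ)
      = (x^P + x^Q) * f x + ((μ^P + μ^Q) * f x + (x^P + x^Q) * f μ)
        + (μ^P + μ^Q) * f μ := by
    noncomm_ring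
  rw [h2] at h1
  exact add_left_cancel (add_right_cancel h1)

set_option maxHeartbeats 1000000 in
lemma caseB_form
    (hf : ∀ x y : D, f (x + y) = f x + f y)
    (hstep : ∀ x : D, f (x * x) = (x ^ P + x ^ Q) * f x)
    (hPpow : ∀ y z : D, Commute y z → (y + z) ^ P = y ^ P + z ^ P)
    (hQpow : ∀ y z : D, Commute y z → (y + z) ^ Q = y ^ Q + z ^ Q)
    (μ : D) (hμ : ∀ y : D, μ * y = y * μ)
    (hc : μ ^ P - μ ^ Q ≠ 0) (x : D) :
    f x = (x ^ P - x ^ Q) * ((μ ^ P - μ ^ Q)⁻¹ * f μ) := by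
  have hcμx : Commute μ x := hμ x
  have hμμ : ∀ y : D, (μ*μ) * y = y * (μ*μ) := by
    intro y
    calc μ*μ*y = μ*(μ*y) := mul_assoc _ _ _
      _ = μ*(y*μ) := by rw [hμ y]
      _ = μ*y*μ := (mul_assoc _ _ _).symm
      _ = y*μ*μ := by rw [hμ y]
      _ = y*(μ*μ) := mul_assoc _ _ _
  have e1 := sharp hf hstep hPpow hQpow μ hμ x
  have e1' := congrArg (fun z => (μ^P + μ^Q) * z) e1
  have e2 := sharp hf hstep hPpow hQpow μ hμ (μ * x)
  rw [hcμx.mul_pow P, hcμx.mul_pow Q] at e2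
  have e3 := sharp hf hstep hPpow hQpow (μ*μ) hμμ x
  rw [(Commute.refl μ).mul_pow P, (Commute.refl μ).mul_pow Q, hstep μ, mul_assoc] at e3
  have hcomPQ : Commute (x^P + x^Q) (μ^P + μ^Q) :=
    (((hcμx.symm).pow_pow P P).add_right ((hcμx.symm).pow_pow P Q)).add_left
      (((hcμx.symm).pow_pow Q P).add_right ((hcμx.symm).pow_pow Q Q))
  have hswap : (x^P + x^Q) * ((μ^P + μ^Q) * f μ) = (μ^P + μ^Q) * ((x^P + x^Q) * f μ) := by
    rw [← mul_assoc, hcomPQ.eq, mul_assoc]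
  rw [hswap] at e3
  have G : (μ^P + μ^Q) * f (μ*x) + (μ^P * x^P + μ^Q * x^Q) * f μ
      = (μ^P * μ^P + μ^Q * μ^Q) * f x + (μ^P + μ^Q) * ((x^P + x^Q) * f μ) :=
    e2.symm.trans e3
  have key : (μ^P - μ^Q) * ((μ^P - μ^Q) * f x) - (μ^P - μ^Q) * ((x^P - x^Q) * f μ)
      = ((μ^P + μ^Q) * (f (μ*x) + f (μ*x))
          - (μ^P + μ^Q) * ((μ^P + μ^Q) * f x + (x^P + x^Q) * f μ))
        - (((μ^P + μ^Q) * f (μ*x) + (μ^P * x^P + μ^Q * x^Q) * f μ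
            - ((μ^P * μ^P + μ^Q * μ^Q) * f x + (μ^P + μ^Q) * ((x^P + x^Q) * f μ)))
          + ((μ^P + μ^Q) * f (μ*x) + (μ^P * x^P + μ^Q * x^Q) * f μ
            - ((μ^P * μ^P + μ^Q * μ^Q) * f x + (μ^P + μ^Q) * ((x^P + x^Q) * f μ)))) := by
    noncomm_ring
  rw [e1', G] at key
  simp only [sub_self, add_zero, zero_add, sub_zero, zero_sub, neg_zero] at key
  have T := sub_eq_zero.mp key
  have T1 : (μ^P - μ^Q) * f x = (x^P - x^Q) * f μ := mul_left_cancel₀ hc T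
  have hcent : Commute (μ^P - μ^Q) (x^P - x^Q) :=
    ((hcμx.pow_pow P P).sub_right (hcμx.pow_pow P Q)).sub_left
      ((hcμx.pow_pow Q P).sub_right (hcμx.pow_pow Q Q))
  calc f x = (μ^P - μ^Q)⁻¹ * ((μ^P - μ^Q) * f x) := (inv_mul_cancel_left₀ hc _).symm
    _ = (μ^P - μ^Q)⁻¹ * ((x^P - x^Q) * f μ) := by rw [T1]
    _ = (x ^ P - x ^ Q) * ((μ ^ P - μ ^ Q)⁻¹ * f μ) := by
        rw [← mul_assoc, ← mul_assoc, (hcent.inv_left₀).eq]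

end abstractPQ

lemma nat_dvd_aux {p : ℕ} (hp : 2 ≤ p) (s : ℕ) :
    ∀ m : ℕ, (p ^ s - 1 ∣ p ^ m - 1) → s ∣ m := by
  intro m
  induction m using Nat.strong_induction_on with
  | _ m ih =>
    intro h
    rcases lt_or_ge m s with hms | hms
    · have h1 : p ^ m < p ^ s := Nat.pow_lt_pow_right hp hms
      have h2 : p ^ m - 1 < p ^ s - 1 := by
        have hm1 : 1 ≤ p ^ m := Nat.one_le_pow _ _ (by omega)
        omega
      have h3 : p ^ m - 1 = 0 := by
        rcases Nat.eq_zero_or_pos (p ^ s - 1) with h0 | hpos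
        · have hx1 : 1 ≤ p ^ s := Nat.one_le_pow _ _ (by omega)
          have hx2 : p ^ s ≤ 1 := by omega
          have : p ^ m < 1 := lt_of_lt_of_le h1 hx2
          omega
        · exact Nat.eq_zero_of_dvd_of_lt h h2
      have hm1 : 1 ≤ p ^ m := Nat.one_le_pow _ _ (by omega)
      have hm0 : m = 0 := by
        by_contra hm0
        have : p ≤ p ^ m := by
          calc p = p ^ 1 := (pow_one p).symm
            _ ≤ p ^ m := Nat.pow_le_pow_right (by omega) (by omega)
        omega
      simp [hm0]
    · have hpow : p ^ (m - s) * p ^ s = p ^ m := by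
        rw [← pow_add]; congr 1; omega
      have h1 : p ^ s - 1 ∣ p ^ (m - s) * (p ^ s - 1) := dvd_mul_left _ _
      have hsub : p ^ m - 1 - p ^ (m - s) * (p ^ s - 1) = p ^ (m - s) - 1 := by
        have e : p ^ (m - s) * (p ^ s - 1) = p ^ m - p ^ (m - s) := by
          rw [Nat.mul_sub, hpow, mul_one]
        have hm1 : 1 ≤ p ^ m := Nat.one_le_pow _ _ (by omega)
        have hms1 : 1 ≤ p ^ (m - s) := Nat.one_le_pow _ _ (by omega)
        have hle : p ^ (m - s) ≤ p ^ m := Nat.pow_le_pow_right (by omega) (by omega)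
        omega
      have h2 : p ^ s - 1 ∣ p ^ (m - s) - 1 := by
        have := Nat.dvd_sub h h1
        rwa [hsub] at this
      by_cases hs0 : s = 0
      · subst hs0
        have h0 : (0:ℕ) ∣ p ^ m - 1 := by simpa using h
        have hm1 : p ^ m - 1 = 0 := Nat.eq_zero_of_zero_dvd h0
        have hp1 : 1 ≤ p ^ m := Nat.one_le_pow _ _ (by omega)
        have hm0 : m = 0 := by
          by_contra hmm
          have : p ≤ p ^ m := by
            calc p = p ^ 1 := (pow_one p).symm
              _ ≤ p ^ m := Nat.pow_le_pow_right (by omega) (by omega)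
          omega
        simp [hm0]
      have hlt : m - s < m := by omega
      obtain ⟨k, hk⟩ := ih (m - s) hlt h2
      exact ⟨k + 1, by rw [Nat.mul_succ]; omega⟩

lemma caseA (D : Type*) [DivisionRing D] (p : ℕ) (hp : p.Prime) (hp2 : 2 < p) [CharP D p]
    (m : ℕ) (hm : 0 < m)
    (hz : ∀ z : D, z ∈ Subring.center D → z ^ (p ^ m) = z) :
    Finite (Subring.center D) ∧
      ∃ r : ℕ, 1 ≤ r ∧ (Nat.card (Subring.center D)) ^ r = p ^ m := by
  set K := Subring.center D with hK
  have ht1 : 1 < p ^ m := by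
    calc 1 < p := by omega
      _ = p ^ 1 := (pow_one p).symm
      _ ≤ p ^ m := Nat.pow_le_pow_right (by omega) (by omega)
  have hzK : ∀ z : K, z ^ (p ^ m) = z := by
    intro z
    have := hz (z : D) z.2
    ext
    push_cast
    exact this
  have hfin : Finite K := by
    have hpoly : (X ^ (p ^ m) - X : K[X]) ≠ 0 := by
      intro h
      have := congrArg (fun q => Polynomial.coeff q (p ^ m)) h
      simp only [Polynomial.coeff_sub, Polynomial.coeff_X_pow, if_pos rfl,
        Polynomial.coeff_zero] at this
      rw [Polynomial.coeff_X_of_ne_one (by omega)] at this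
      norm_num at this
    have hroots := Polynomial.finite_setOf_isRoot hpoly
    have huniv : (Set.univ : Set K) ⊆ { x | (X ^ (p ^ m) - X : K[X]).IsRoot x } := by
      intro z _
      simp only [Set.mem_setOf_eq, Polynomial.IsRoot, Polynomial.eval_sub,
        Polynomial.eval_pow, Polynomial.eval_X]
      rw [hzK z, sub_self]
    exact Set.finite_univ_iff.mp (hroots.subset huniv)
  refine ⟨hfin, ?_⟩
  have : Fintype K := Fintype.ofFinite K
  classical
  letI : Field K := Fintype.fieldOfDomain K
  obtain ⟨sn, hps, hcard⟩ := FiniteField.card K p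
  set s := (sn : ℕ) with hs
  have hs1 : 1 ≤ s := sn.2
  obtain ⟨g, hg⟩ := IsCyclic.exists_generator (α := Kˣ)
  have horder : orderOf g = Fintype.card K - 1 := by
    rw [orderOf_eq_card_of_forall_mem_zpowers hg, Nat.card_eq_fintype_card, Fintype.card_units]
  have hgfix : g ^ (p ^ m) = g :=
    Units.ext (by rw [Units.val_pow_eq_pow_val]; exact hzK (g : K))
  have hgt : g ^ (p ^ m - 1) = 1 := by
    have h2 : g ^ (p ^ m - 1) * g = g ^ (p ^ m) := by
      rw [← pow_succ]
      congr 1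
      omega
    rw [hgfix] at h2
    have := mul_right_cancel (h2.trans (one_mul g).symm)
    exact this
  have hdvd : p ^ s - 1 ∣ p ^ m - 1 := by
    rw [← hcard, ← horder]
    exact orderOf_dvd_of_pow_eq_one hgt
  have hsm : s ∣ m := nat_dvd_aux (by omega) s m hdvd
  refine ⟨m / s, ?_, ?_⟩
  · exact (Nat.one_le_div_iff (by omega)).mpr (Nat.le_of_dvd hm hsm)
  · rw [Nat.card_eq_fintype_card, hcard, ← pow_mul, Nat.mul_div_cancel' hsm]


end Lem7Aux2

/-- Let `D` be a noncommutative division ring with `char D = p > 2` and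
`n = p^(ℓ+m) + p^ℓ` with `ℓ ≥ 0`, `m > 0`. Let `f : D → D` be an additive map satisfying
`f(x) = −xⁿ f(x⁻¹)` for all `x ∈ D^×`. Then either `f = 0`, or `Z(D)` is a finite field
and `p^m` is a positive power of `|Z(D)|`. -/
theorem lem7 (D : Type*) [DivisionRing D]
    (hnc : ∃ a b : D, a * b ≠ b * a)
    (p : ℕ) (hp : p.Prime) (hp2 : 2 < p) [CharP D p]
    (n ℓ m : ℕ) (hm : 0 < m) (hnlm : n = p ^ (ℓ + m) + p ^ ℓ)
    (f : D → D)
    (hf : ∀ x y : D, f (x + y) = f x + f y)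
    (hff : ∀ x : D, x ≠ 0 → f x = -(x ^ n * f x⁻¹)) :
    f = 0 ∨
      (Finite (Subring.center D) ∧
        ∃ r : ℕ, 1 ≤ r ∧ (Nat.card (Subring.center D)) ^ r = p ^ m) := by
  classical
  haveI : Fact p.Prime := ⟨hp⟩
  have hppos : 0 < p := by omega
  have hQ0 : p ^ ℓ ≠ 0 := (Nat.pow_pos hppos).ne'
  have ht0 : p ^ m ≠ 0 := (Nat.pow_pos hppos).ne'
  have hstep := Lem7Aux2.step1_all p hf hff hp2 hnlm
  have hPpow : ∀ y z : D, Commute y z →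
      (y + z) ^ (p^(ℓ+m)) = y ^ (p^(ℓ+m)) + z ^ (p^(ℓ+m)) :=
    fun y z h => add_pow_char_pow_of_commute p (ℓ+m) h
  have hQpow : ∀ y z : D, Commute y z → (y + z) ^ (p^ℓ) = y ^ (p^ℓ) + z ^ (p^ℓ) :=
    fun y z h => add_pow_char_pow_of_commute p ℓ h
  have hQt : p ^ m * p ^ ℓ = p ^ (ℓ + m) := by rw [← pow_add, Nat.add_comm]
  by_cases hA : ∀ z : D, (∀ y : D, z * y = y * z) → z ^ (p ^ (ℓ+m)) = z ^ (p ^ ℓ)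
  · right
    apply Lem7Aux2.caseA D p hp hp2 m hm
    intro z hzmem
    have hzc : ∀ y : D, z * y = y * z := fun y => (Subring.mem_center_iff.mp hzmem y).symm
    have h1 : z ^ (p ^ (ℓ+m)) = z ^ (p ^ ℓ) := hA z hzc
    have h2 : (z ^ (p ^ m) - z) ^ (p ^ ℓ) = 0 := by
      rw [sub_pow_char_pow_of_commute p ℓ ((Commute.refl z).pow_left (p ^ m)),
        ← pow_mul, hQt, h1, sub_self]
    exact sub_eq_zero.mp ((pow_eq_zero_iff hQ0).mp h2)
  · push_neg at hA
    obtain ⟨μ, hμc, hμPQ⟩ := hA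
    have hc : μ ^ (p^(ℓ+m)) - μ ^ (p^ℓ) ≠ 0 := sub_ne_zero.mpr hμPQ
    have hform := Lem7Aux2.caseB_form hf hstep hPpow hQpow μ hμc hc
    by_cases ha : (μ ^ (p^(ℓ+m)) - μ ^ (p^ℓ))⁻¹ * f μ = 0
    · left
      funext x
      rw [hform x, ha, mul_zero]
      rfl
    · exfalso
      have gadd : ∀ x y : D, (x+y)^(p^(ℓ+m)) - (x+y)^(p^ℓ)
          = (x^(p^(ℓ+m)) - x^(p^ℓ)) + (y^(p^(ℓ+m)) - y^(p^ℓ)) := by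
        intro x y
        have h := hf x y
        rw [hform (x+y), hform x, hform y, ← add_mul] at h
        exact mul_right_cancel₀ ha h
      have hcomμ : ∀ z : D, Commute μ z := fun z => hμc z
      have hboth : ∀ x y : D, (x+y)^(p^(ℓ+m)) = x^(p^(ℓ+m)) + y^(p^(ℓ+m))
          ∧ (x+y)^(p^ℓ) = x^(p^ℓ) + y^(p^ℓ) := by
        intro x y
        have h1 := gadd x y
        have h2 := gadd (μ*x) (μ*y)
        rw [← mul_add, (hcomμ (x+y)).mul_pow, (hcomμ (x+y)).mul_pow,
          (hcomμ x).mul_pow, (hcomμ x).mul_pow, (hcomμ y).mul_pow, (hcomμ y).mul_pow] at h2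
        have hAB : (x+y)^(p^(ℓ+m)) - x^(p^(ℓ+m)) - y^(p^(ℓ+m))
            = (x+y)^(p^ℓ) - x^(p^ℓ) - y^(p^ℓ) := by
          have hh : (x+y)^(p^(ℓ+m)) - x^(p^(ℓ+m)) - y^(p^(ℓ+m))
              - ((x+y)^(p^ℓ) - x^(p^ℓ) - y^(p^ℓ))
              = ((x+y)^(p^(ℓ+m)) - (x+y)^(p^ℓ))
                - ((x^(p^(ℓ+m)) - x^(p^ℓ)) + (y^(p^(ℓ+m)) - y^(p^ℓ))) := by abel
          rw [h1, sub_self] at hh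
          exact sub_eq_zero.mp hh
        have hμAB : μ^(p^(ℓ+m)) * ((x+y)^(p^(ℓ+m)) - x^(p^(ℓ+m)) - y^(p^(ℓ+m)))
            = μ^(p^ℓ) * ((x+y)^(p^ℓ) - x^(p^ℓ) - y^(p^ℓ)) := by
          have hh : μ^(p^(ℓ+m)) * ((x+y)^(p^(ℓ+m)) - x^(p^(ℓ+m)) - y^(p^(ℓ+m)))
              - μ^(p^ℓ) * ((x+y)^(p^ℓ) - x^(p^ℓ) - y^(p^ℓ))
              = (μ^(p^(ℓ+m))*(x+y)^(p^(ℓ+m)) - μ^(p^ℓ)*(x+y)^(p^ℓ))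
                - ((μ^(p^(ℓ+m))*x^(p^(ℓ+m)) - μ^(p^ℓ)*x^(p^ℓ))
                  + (μ^(p^(ℓ+m))*y^(p^(ℓ+m)) - μ^(p^ℓ)*y^(p^ℓ))) := by noncomm_ring
          rw [h2, sub_self] at hh
          exact sub_eq_zero.mp hh
        rw [← hAB] at hμAB
        have hz0 : (μ^(p^(ℓ+m)) - μ^(p^ℓ))
            * ((x+y)^(p^(ℓ+m)) - x^(p^(ℓ+m)) - y^(p^(ℓ+m))) = 0 := by
          rw [sub_mul, hμAB, sub_self]
        have hA0 : (x+y)^(p^(ℓ+m)) - x^(p^(ℓ+m)) - y^(p^(ℓ+m)) = 0 :=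
          (mul_eq_zero.mp hz0).resolve_left hc
        constructor
        · have hA0' := hA0
          rw [sub_sub] at hA0'
          exact sub_eq_zero.mp hA0'
        · have hB0 : (x+y)^(p^ℓ) - x^(p^ℓ) - y^(p^ℓ) = 0 := by rw [← hAB]; exact hA0
          rw [sub_sub] at hB0
          exact sub_eq_zero.mp hB0
      have hQadd : ∀ x y : D, (x+y)^(p^ℓ) = x^(p^ℓ) + y^(p^ℓ) := fun x y => (hboth x y).2
      have hPadd : ∀ x y : D, (x+y)^(p^(ℓ+m)) = x^(p^(ℓ+m)) + y^(p^(ℓ+m)) :=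
        fun x y => (hboth x y).1
      have hTadd : ∀ x y : D, (x+y)^(p^m) = x^(p^m) + y^(p^m) := by
        intro x y
        apply Lem7Aux.pow_t_inj hQ0 hQadd
        rw [hQadd (x^(p^m)) (y^(p^m)), ← pow_mul, ← pow_mul, ← pow_mul, hQt, hPadd]
      have hodd : Odd (p ^ m) := (hp.odd_of_ne_two (by omega)).pow
      have hμt : μ ^ (p ^ m) ≠ μ := by
        intro h
        apply hμPQ
        calc μ ^ (p^(ℓ+m)) = (μ ^ (p^m)) ^ (p^ℓ) := by rw [← pow_mul, hQt]
          _ = μ ^ (p^ℓ) := by rw [h]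
      have pairwise : ∀ a b : D, (a*b)^(p^m) = a^(p^m)*b^(p^m)
          ∨ (a*b)^(p^m) = b^(p^m)*a^(p^m) := by
        intro a b
        rcases mul_eq_zero.mp (Lem7Aux.jr ht0 hTadd a b) with h | h
        · left; exact sub_eq_zero.mp h
        · right; exact sub_eq_zero.mp h
      rcases Lem7Aux.hom_or_anti hTadd pairwise with hom | anti
      · exact hμt (Lem7Aux.hom_fixed ht0 hodd hTadd hnc hom μ)
      · obtain ⟨a0, b0, hab⟩ := hnc
        exact hμt (Lem7Aux.anti_fixed ht0 hodd hTadd hab anti μ hμc)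
end

section
/- Let F be a field and R a unital F-algebra that is additively generated by units, i.e., every element of R is a finite sum of units of R. Let n ≠ 2 be an integer, and suppose f, g : R → R are additive maps satisfying f(x) = xⁿ·g(x⁻¹) for all units x ∈ R^× (where xⁿ is computed in the group of units when n is negative). If it is not the case that F has characteristic p > 0 with (p−1) dividing (n−2), then f = 0 and g = 0. -/
/-- There exists a "prime-field unit" `c` (equal to a natural number cast) with
`c ^ (n - 2) ≠ 1`. -/
lemma exists_good_unit (F : Type*) [Field F] (n : ℤ) (hn : n ≠ 2)
    (hchar : ¬ ∃ p : ℕ, 0 < p ∧ CharP F p ∧ ((p : ℤ) - 1) ∣ (n - 2)) :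
    ∃ (k : ℕ) (c : Fˣ), (c : F) = (k : F) ∧ c ^ (n - 2) ≠ 1 := by
  set p := ringChar F with hpdef
  have hp : CharP F p := ringChar.charP F
  rcases Nat.eq_zero_or_pos p with h0 | hpos
  · -- characteristic zero
    haveI : CharP F 0 := h0 ▸ hp
    haveI : CharZero F := CharP.charP_to_charZero F
    refine ⟨2, Units.mk0 (2 : F) two_ne_zero, rfl, ?_⟩
    intro hone
    have hord : orderOf (Units.mk0 (2 : F) two_ne_zero) = 0 := by
      rw [orderOf_eq_zero_iff, isOfFinOrder_iff_pow_eq_one]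
      rintro ⟨m, hm, hpow⟩
      have : ((2 : F)) ^ m = 1 := by
        have := congrArg (Units.val) hpow
        simpa using this
      have h2 : ((2 ^ m : ℕ) : F) = ((1 : ℕ) : F) := by push_cast; simpa using this
      have : (2:ℕ) ^ m = 1 := Nat.cast_injective h2
      have := Nat.one_lt_two_pow_iff.mpr hm.ne'
      omega
    have := orderOf_dvd_iff_zpow_eq_one.mpr hone
    rw [hord] at this
    simp only [Nat.cast_zero, zero_dvd_iff, sub_eq_zero] at this
    exact hn this
  · -- positive characteristic
    haveI : NeZero p := ⟨hpos.ne'⟩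
    haveI hfact : Fact p.Prime := CharP.char_is_prime_of_pos F p
    have hnd : ¬ ((p : ℤ) - 1) ∣ (n - 2) := fun hd => hchar ⟨p, hpos, hp, hd⟩
    let ψ : ZMod p →+* F := ZMod.castHom dvd_rfl F
    have hψ : Function.Injective ψ := ψ.injective
    obtain ⟨ζ, hζ⟩ := IsCyclic.exists_generator (α := (ZMod p)ˣ)
    have hord : orderOf ζ = p - 1 := by
      rw [orderOf_eq_card_of_forall_mem_zpowers hζ, Nat.card_eq_fintype_card, ZMod.card_units p]
    refine ⟨(ζ : ZMod p).val, Units.map ψ.toMonoidHom ζ, ?_, ?_⟩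
    · show ψ (ζ : ZMod p) = _
      conv_lhs => rw [← ZMod.natCast_rightInverse (ζ : ZMod p)]
      rw [map_natCast]
    · intro hone
      rw [← map_zpow] at hone
      have h1 : Units.map ψ.toMonoidHom (ζ ^ (n - 2)) = Units.map ψ.toMonoidHom 1 := by
        simpa using hone
      have h2 : ζ ^ (n - 2) = 1 := Units.map_injective hψ h1
      have h3 := orderOf_dvd_iff_zpow_eq_one.mpr h2
      rw [hord] at h3
      have : ((p : ℤ) - 1) ∣ (n - 2) := by
        have hc : ((p - 1 : ℕ) : ℤ) = (p : ℤ) - 1 := by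
          have := hfact.out.two_le; push_cast [Nat.cast_sub (by omega : 1 ≤ p)]; ring
        rwa [hc] at h3
      exact hnd this

/-- Let `F` be a field and `R` a unital `F`-algebra additively generated by units. Let
`n ≠ 2` be an integer and `f, g : R → R` additive maps with `f(x) = xⁿ g(x⁻¹)` for all
units `x` (powers computed in the group of units). If it is not the case that
`char F = p > 0` with `p − 1 ∣ n − 2`, then `f = 0` and `g = 0`. -/
theorem thm5 (F : Type*) [Field F] (R : Type*) [Ring R] [Algebra F R]
    (hgen : ∀ x : R, ∃ (k : ℕ) (u : Fin k → Rˣ), x = ∑ i : Fin k, (u i : R))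
    (n : ℤ) (hn : n ≠ 2) (f g : R → R)
    (hf : ∀ x y : R, f (x + y) = f x + f y)
    (hg : ∀ x y : R, g (x + y) = g x + g y)
    (hfg : ∀ x : Rˣ, f (x : R) = ((x ^ n : Rˣ) : R) * g ((x⁻¹ : Rˣ) : R))
    (hchar : ¬ ∃ p : ℕ, 0 < p ∧ CharP F p ∧ ((p : ℤ) - 1) ∣ (n - 2)) :
    f = 0 ∧ g = 0 := by
  obtain ⟨k, c, hck, hcn⟩ := exists_good_unit F n hn hchar
  let f' : R →+ R := AddMonoidHom.mk' f hf
  let g' : R →+ R := AddMonoidHom.mk' g hg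
  have hf'apply : ∀ x : R, f' x = f x := fun _ => rfl
  have hg'apply : ∀ x : R, g' x = g x := fun _ => rfl
  let φ : F →+* R := algebraMap F R
  let w : Rˣ := Units.map φ.toMonoidHom c
  have hw : (w : R) = (k : R) := by
    show φ (c : F) = (k : R)
    rw [hck, map_natCast]
  -- the scalar c^2 - c^n is nonzero in F
  have hne : (c : F) * (c : F) - ((c ^ n : Fˣ) : F) ≠ 0 := by
    rw [sub_ne_zero]
    intro hEq
    apply hcn
    have hc2 : ((c ^ (2 : ℤ) : Fˣ) : F) = (c : F) * (c : F) := by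
      rw [show ((2 : ℤ)) = ((2 : ℕ) : ℤ) from rfl, zpow_natCast]
      simp [sq]
    have : c ^ (2 : ℤ) = c ^ n := Units.ext (by rw [hc2, hEq])
    rw [zpow_sub, this]
    simp
  have hunit : IsUnit (φ ((c : F) * (c : F) - ((c ^ n : Fˣ) : F))) :=
    (isUnit_iff_ne_zero.mpr hne).map φ
  -- f vanishes on units
  have hfu : ∀ x : Rˣ, f (x : R) = 0 := by
    intro x
    have hcomm : ∀ r : R, (w : R) * r = r * (w : R) := fun r => by
      rw [hw]; exact (Nat.cast_commute k r).eq
    have hwx : w * x = x * w := Units.ext (by simpa using hcomm (x : R))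
    have h1 := hfg (w * x)
    have hlhs : ((w * x : Rˣ) : R) = k • (x : R) := by
      rw [Units.val_mul, hw, nsmul_eq_mul]
    have hpow : ((w * x) ^ n : Rˣ) = w ^ n * x ^ n :=
      Commute.mul_zpow hwx n
    have hinv : ((w * x)⁻¹ : Rˣ) = w⁻¹ * x⁻¹ := by
      rw [mul_inv_rev]
      exact ((Commute.inv_inv hwx).eq).symm
    rw [hlhs, hpow, hinv] at h1
    have h1' : k • f (x : R) = ((w ^ n : Rˣ) : R) * (((x ^ n : Rˣ) : R) *
        g (((w⁻¹ : Rˣ) : R) * ((x⁻¹ : Rˣ) : R))) := by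
      rw [← hf'apply, map_nsmul f'] at h1
      simpa [mul_assoc, hf'apply] using h1
    have h2 : (k : R) * (k • f (x : R)) = ((w ^ n : Rˣ) : R) * f (x : R) := by
      rw [h1']
      have hcn' : ∀ r : R, (k : R) * r = r * (k : R) := fun r => (Nat.cast_commute k r).eq
      calc (k : R) * (((w ^ n : Rˣ) : R) * (((x ^ n : Rˣ) : R) *
            g (((w⁻¹ : Rˣ) : R) * ((x⁻¹ : Rˣ) : R))))
          = ((w ^ n : Rˣ) : R) * (((x ^ n : Rˣ) : R) *
            ((k : R) * g (((w⁻¹ : Rˣ) : R) * ((x⁻¹ : Rˣ) : R)))) := by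
            rw [hcn', mul_assoc, mul_assoc]
            congr 1
            rw [← mul_assoc, hcn', mul_assoc]
      _ = ((w ^ n : Rˣ) : R) * (((x ^ n : Rˣ) : R) * g ((x⁻¹ : Rˣ) : R)) := by
            congr 2
            rw [← nsmul_eq_mul, ← hg'apply, ← map_nsmul g', hg'apply]
            congr 1
            rw [nsmul_eq_mul, ← hw, ← mul_assoc, Units.mul_inv, one_mul]
      _ = ((w ^ n : Rˣ) : R) * f (x : R) := by rw [← hfg x]
    have h3 : ((k : R) * (k : R) - ((w ^ n : Rˣ) : R)) * f (x : R) = 0 := by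
      rw [sub_mul, sub_eq_zero, mul_assoc, ← nsmul_eq_mul (k) (f (x :R)), h2]
    have hwn : ((w ^ n : Rˣ) : R) = φ ((c ^ n : Fˣ) : F) := by
      show ((w ^ n : Rˣ) : R) = _
      have : w ^ n = Units.map φ.toMonoidHom (c ^ n) := (map_zpow (Units.map φ.toMonoidHom) c n).symm
      rw [this]; rfl
    have hkk : (k : R) * (k : R) - ((w ^ n : Rˣ) : R)
        = φ ((c : F) * (c : F) - ((c ^ n : Fˣ) : F)) := by
      rw [hwn, map_sub, map_mul]
      congr 2 <;> rw [hck, map_natCast]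
    rw [hkk] at h3
    exact (hunit.mul_right_eq_zero).mp h3
  have hf0 : f 0 = 0 := by
    have := hf 0 0
    simpa using this.symm
  have hfzero : f = 0 := by
    funext x
    obtain ⟨m, u, rfl⟩ := hgen x
    show f _ = 0
    rw [← hf'apply, map_sum]
    simp [hf'apply, hfu]
  constructor
  · exact hfzero
  · -- g vanishes on units
    have hgu : ∀ v : Rˣ, g (v : R) = 0 := by
      intro v
      have h1 := hfg v⁻¹
      rw [inv_inv, hfzero] at h1
      have h2 : ((v⁻¹ ^ n : Rˣ) : R) * g (v : R) = 0 := h1.symm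
      exact ((v⁻¹ ^ n : Rˣ).isUnit.mul_right_eq_zero).mp h2
    funext x
    obtain ⟨m, u, rfl⟩ := hgen x
    show g _ = 0
    rw [← hg'apply, map_sum]
    simp [hg'apply, hgu]
end
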